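/- arXiv:1408.0512 — 4 statements merged into one kernel-verified Lean document; each statement's English description precedes it below -/
import Mathlib

section
/- For an odd prime p and integer k with 0 ≤ k ≤ (p-1)/2, the q-binomial coefficient [((p-1)/2 + k) choose 2k] with base q^2 is congruent to (-1)^k · [2k choose k]_{q^2} · q^{kp - k^2} / ((-q;q)_{2k})^2 modulo Φ where Φ = (1 + q + ... + q^{p-1})^2, as an identity of rational functions in q whose denominators are coprime to 1+q+...+q^{p-1}. -/
open Finset Polynomial

noncomputable def qP {K : Type*} [Field K] (a q : K) (n : ℕ) : K :=
  ∏ i ∈ Finset.range n, (1 - a * q ^ i)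

noncomputable def qBin {K : Type*} [Field K] (q : K) (n k : ℕ) : K :=
  if k ≤ n then qP (q ^ (n - k + 1)) q k / qP q q k else 0

noncomputable def qq : RatFunc ℚ := RatFunc.X

noncomputable def Phi (p : ℕ) : Polynomial ℚ := ∑ i ∈ Finset.range p, Polynomial.X ^ i

/-- `f ≡ g (mod (Phi p)^r)`: the difference, as a rational function with denominator
coprime to `Phi p`, has numerator divisible by `(Phi p)^r`. -/
def CongrModPow (f g : RatFunc ℚ) (p r : ℕ) : Prop :=
  ∃ A B : Polynomial ℚ, IsCoprime B (Phi p) ∧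
    (f - g) * algebraMap (Polynomial ℚ) (RatFunc ℚ) B =
      algebraMap (Polynomial ℚ) (RatFunc ℚ) ((Phi p) ^ r * A)

lemma sum_odds (k : ℕ) : ∑ i ∈ Finset.range k, (2*i+1) = k^2 := by
  induction k with
  | zero => simp
  | succ n ih => rw [Finset.sum_range_succ, ih]; ring

lemma prod_even_odd (f : ℕ → Polynomial ℚ) (k : ℕ) :
    ∏ i ∈ Finset.range (2*k), f i =
      (∏ i ∈ Finset.range k, f (2*i)) * ∏ i ∈ Finset.range k, f (2*i+1) := by
  induction k with
  | zero => simp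
  | succ n ih =>
    have h : 2*(n+1) = (2*n) + 1 + 1 := by ring
    rw [h, Finset.prod_range_succ, Finset.prod_range_succ, Finset.prod_range_succ,
      Finset.prod_range_succ, ih]
    ring

lemma dvd_gcd_pow_sub_one (f : Polynomial ℚ) :
    ∀ a b : ℕ, (f ∣ X^a - 1) → (f ∣ X^b - 1) → f ∣ X^(Nat.gcd a b) - 1 := by
  intro a
  induction a using Nat.strong_induction_on with
  | _ a ih =>
    intro b ha hb
    rcases Nat.eq_zero_or_pos a with h0 | h0
    · subst h0; simpa using hb
    · rw [Nat.gcd_rec]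
      refine ih (b % a) (Nat.mod_lt _ h0) a ?_ ha
      have h1 : (X:Polynomial ℚ)^a - 1 ∣ X^(a*(b/a)) - 1 := by
        simpa [pow_mul] using sub_dvd_pow_sub_pow ((X:Polynomial ℚ)^a) 1 (b/a)
      have h2 : (X:Polynomial ℚ)^b - 1
          = X^(b%a) * (X^(a*(b/a)) - 1) + (X^(b%a) - 1) := by
        rw [mul_sub, ← pow_add, Nat.mod_add_div b a]; ring
      have h3 : f ∣ X^(b%a) * (X^(a*(b/a)) - 1) := Dvd.dvd.mul_left (ha.trans h1) _
      have := dvd_sub hb h3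
      rw [h2] at this
      simpa using this

lemma Phi_mul (p : ℕ) : Phi p * (X - 1) = X^p - 1 := geom_sum_mul X p

lemma Phi_irr (p : ℕ) (hp : p.Prime) : Irreducible (Phi p) := by
  have : Fact p.Prime := ⟨hp⟩
  rw [show Phi p = cyclotomic p ℚ from by rw [cyclotomic_prime ℚ p, Phi]]
  exact cyclotomic.irreducible_rat hp.pos

lemma Phi_natDegree (p : ℕ) (hp : p.Prime) : (Phi p).natDegree = p - 1 := by
  have : Fact p.Prime := ⟨hp⟩
  rw [show Phi p = cyclotomic p ℚ from by rw [cyclotomic_prime ℚ p, Phi]]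
  rw [natDegree_cyclotomic, Nat.totient_prime hp]

lemma Phi_dvd_imp (p : ℕ) (hp : p.Prime) (hp3 : 3 ≤ p) (m : ℕ)
    (h : Phi p ∣ X^m - 1) : p ∣ m := by
  by_contra hnd
  have hphi_p : Phi p ∣ (X:Polynomial ℚ)^p - 1 := ⟨X - 1, (Phi_mul p).symm⟩
  have hg : Nat.gcd p m = 1 := hp.coprime_iff_not_dvd.mpr hnd
  have hd := dvd_gcd_pow_sub_one (Phi p) p m hphi_p h
  rw [hg, pow_one] at hd
  have hXone : (X : Polynomial ℚ) - 1 ≠ 0 := X_sub_C_ne_zero 1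
  have hdeg := Polynomial.natDegree_le_of_dvd hd (by simpa using hXone)
  rw [Phi_natDegree p hp] at hdeg
  have h1 : ((X:Polynomial ℚ) - 1).natDegree = 1 := by
    simpa using natDegree_X_sub_C (1:ℚ)
  rw [h1] at hdeg
  omega

lemma key_dvd (p k : ℕ) (hk : 2*k < p) :
    ((X:Polynomial ℚ)^p - 1)^2 ∣
      (∏ i ∈ Finset.range (2*k), (1 - X^(p + (2*i+1) - 2*k))) * X^(k^2)
        - (-1)^k * X^(k*p) * ∏ i ∈ Finset.range k, (1 - X^(2*i+1))^2 := by
  have hsplit : (∏ i ∈ Finset.range (2*k), ((1:Polynomial ℚ) - X^(p + (2*i+1) - 2*k))) * X^(k^2)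
      = ∏ i ∈ Finset.range k, ((X^(2*i+1) - X^p) * (1 - X^(p+(2*i+1)))) := by
    rw [two_mul, Finset.prod_range_add]
    have h2 : ∀ i ∈ Finset.range k,
        (1:Polynomial ℚ) - X^(p + (2*(k+i)+1) - (k+k)) = 1 - X^(p+(2*i+1)) := by
      intro i _; rw [show p + (2*(k+i)+1) - (k+k) = p + (2*i+1) from by omega]
    rw [Finset.prod_congr rfl h2]
    have h1 : ∏ i ∈ Finset.range k, ((1:Polynomial ℚ) - X^(p + (2*i+1) - (k+k)))
        = ∏ i ∈ Finset.range k, (1 - X^(p - (2*i+1))) := by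
      rw [← Finset.prod_range_reflect (fun i => (1:Polynomial ℚ) - X^(p - (2*i+1))) k]
      refine Finset.prod_congr rfl (fun i hi => ?_)
      rw [Finset.mem_range] at hi
      rw [show p - (2*(k-1-i)+1) = p + (2*i+1) - (k+k) from by omega]
    rw [h1, ← sum_odds k, ← Finset.prod_pow_eq_pow_sum]
    rw [mul_right_comm, ← Finset.prod_mul_distrib, ← Finset.prod_mul_distrib]
    refine Finset.prod_congr rfl (fun i hi => ?_)
    rw [Finset.mem_range] at hi
    rw [sub_mul, one_mul, ← pow_add, show p - (2*i+1) + (2*i+1) = p from by omega]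
  rw [hsplit]
  set g : Polynomial ℚ := ((X:Polynomial ℚ)^p - 1)^2 with hg
  rw [← Ideal.mem_span_singleton (α := Polynomial ℚ)]
  rw [← Ideal.Quotient.eq_zero_iff_mem, map_sub, sub_eq_zero]
  have hfac : ∀ i ∈ Finset.range k,
      Ideal.Quotient.mk (Ideal.span {g}) ((X^(2*i+1) - X^p) * (1 - X^(p+(2*i+1))))
        = Ideal.Quotient.mk (Ideal.span {g}) (-(X^p) * (1 - X^(2*i+1))^2) := by
    intro i _
    rw [Ideal.Quotient.eq]
    refine Ideal.mem_span_singleton.mpr ⟨X^(2*i+1), ?_⟩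
    rw [hg, pow_add]; ring
  rw [map_prod, Finset.prod_congr rfl hfac, ← map_prod]
  congr 1
  rw [Finset.prod_mul_distrib, Finset.prod_const, neg_pow, ← pow_mul, Finset.card_range,
    mul_comm p k]

lemma PI (k : ℕ) :
    (∏ i ∈ Finset.range k, ((1:Polynomial ℚ) - X^(2*k+2+2*i)))
        * ∏ i ∈ Finset.range (2*k), (1 - X^(2*i+2))
      = (∏ i ∈ Finset.range k, (1 - X^(2*i+1))^2)
        * (∏ i ∈ Finset.range k, (1 - X^(2*i+2)))
        * (∏ i ∈ Finset.range (2*k), (1 + X^(i+1)))^2 := by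
  set C := ∏ i ∈ Finset.range k, ((1:Polynomial ℚ) - X^(2*k+2+2*i)) with hC
  set E := ∏ i ∈ Finset.range k, ((1:Polynomial ℚ) - X^(2*i+2)) with hE
  set D := ∏ i ∈ Finset.range (2*k), ((1:Polynomial ℚ) - X^(2*i+2)) with hD
  set P := ∏ i ∈ Finset.range (2*k), ((1:Polynomial ℚ) + X^(i+1)) with hP
  set O := ∏ i ∈ Finset.range k, ((1:Polynomial ℚ) - X^(2*i+1)) with hO
  have ha : D = E * C := by
    rw [hD, two_mul, Finset.prod_range_add, hE, hC]
    congr 1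
    exact Finset.prod_congr rfl (fun i _ => by rw [show 2*(k+i)+2 = 2*k+2+2*i from by ring])
  have hb : D = O * E * P := by
    rw [hD]
    have hterm : ∀ i ∈ Finset.range (2*k),
        (1:Polynomial ℚ) - X^(2*i+2) = (1 - X^(i+1)) * (1 + X^(i+1)) := by
      intro i _
      rw [show 2*i+2 = (i+1)+(i+1) from by ring, pow_add]; ring
    rw [Finset.prod_congr rfl hterm, Finset.prod_mul_distrib, ← hP]
    congr 1
    rw [prod_even_odd (fun i => (1:Polynomial ℚ) - X^(i+1)) k, hO, hE]
  calc C * D = C * (O * E * P) := by rw [← hb]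
    _ = (C * E) * (O * P) := by ring
    _ = (E * C) * (O * P) := by ring
    _ = D * (O * P) := by rw [← ha]
    _ = (O * E * P) * (O * P) := by rw [hb]
    _ = (∏ i ∈ Finset.range k, ((1:Polynomial ℚ) - X^(2*i+1))^2) * E * P^2 := by
        rw [Finset.prod_pow, ← hO]; ring

lemma poly_one_sub_ne (e : ℕ) (he : 0 < e) : (1 - X^e : Polynomial ℚ) ≠ 0 := by
  intro h
  have := congrArg (Polynomial.eval 0) h
  simp [Polynomial.eval_pow, zero_pow he.ne'] at this

lemma poly_one_add_ne (e : ℕ) (he : 0 < e) : (1 + X^e : Polynomial ℚ) ≠ 0 := by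
  intro h
  have := congrArg (Polynomial.eval 0) h
  simp [Polynomial.eval_pow, zero_pow he.ne'] at this

theorem stmt_0 (p : ℕ) (hp : p.Prime) (hodd : Odd p) (k : ℕ) (hk : k ≤ (p - 1) / 2) :
    CongrModPow (qBin (qq ^ 2) ((p - 1) / 2 + k) (2 * k))
      ((-1) ^ k * qBin (qq ^ 2) (2 * k) k * qq ^ (k * p - k ^ 2) /
        (qP (-qq) qq (2 * k)) ^ 2) p 2 := by
  obtain ⟨t, ht⟩ := hodd
  have hp3 : 3 ≤ p := by have := hp.two_le; omega
  set m := (p - 1) / 2 with hm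
  have hpm : p = 2*m + 1 := by omega
  have hkm : k ≤ m := hk
  have h2k : 2*k < p := by omega
  set K := RatFunc ℚ
  set φ : Polynomial ℚ →+* K := (algebraMap (Polynomial ℚ) K) with hφ
  have hφX : φ X = qq := RatFunc.algebraMap_X
  have hφinj : Function.Injective φ := RatFunc.algebraMap_injective ℚ
  -- polynomial players
  set Np := ∏ i ∈ Finset.range (2*k), ((1:Polynomial ℚ) - X^(p + (2*i+1) - 2*k)) with hNp
  set Dp := ∏ i ∈ Finset.range (2*k), ((1:Polynomial ℚ) - X^(2*i+2)) with hDp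
  set Cp := ∏ i ∈ Finset.range k, ((1:Polynomial ℚ) - X^(2*k+2+2*i)) with hCp
  set Ep := ∏ i ∈ Finset.range k, ((1:Polynomial ℚ) - X^(2*i+2)) with hEp
  set Pp := ∏ i ∈ Finset.range (2*k), ((1:Polynomial ℚ) + X^(i+1)) with hPp
  set Op := ∏ i ∈ Finset.range k, ((1:Polynomial ℚ) - X^(2*i+1)) with hOp
  set Mp : Polynomial ℚ := (-1)^k * X^(k*p - k^2) * Op^2 with hMp
  -- nonvanishing
  have hDp0 : Dp ≠ 0 := Finset.prod_ne_zero_iff.mpr (fun i _ => poly_one_sub_ne _ (by omega))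
  have hEp0 : Ep ≠ 0 := Finset.prod_ne_zero_iff.mpr (fun i _ => poly_one_sub_ne _ (by omega))
  have hPp0 : Pp ≠ 0 := Finset.prod_ne_zero_iff.mpr (fun i _ => poly_one_add_ne _ (by omega))
  have hφD : φ Dp ≠ 0 := fun h => hDp0 (hφinj (by simpa using h))
  have hφE : φ Ep ≠ 0 := fun h => hEp0 (hφinj (by simpa using h))
  have hφP : φ Pp ≠ 0 := fun h => hPp0 (hφinj (by simpa using h))
  -- identification of the q-objects
  have hqpow : ∀ e : ℕ, qq ^ e = φ (X^e) := by intro e; rw [map_pow, hφX]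
  have hL : qBin (qq ^ 2) (m + k) (2*k) = φ Np / φ Dp := by
    rw [qBin, if_pos (by omega), qP, qP, hNp, hDp, map_prod, map_prod]
    congr 1
    · refine Finset.prod_congr rfl (fun i hi => ?_)
      rw [Finset.mem_range] at hi
      rw [map_sub, map_one, map_pow, hφX, ← pow_mul, ← pow_mul, ← pow_add]
      rw [show 2*(m + k - 2*k + 1) + 2*i = p + (2*i+1) - 2*k from by omega]
    · refine Finset.prod_congr rfl (fun i _ => ?_)
      rw [map_sub, map_one, map_pow, hφX, ← pow_mul, ← pow_add]
      rw [show 2 + 2*i = 2*i+2 from by omega]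
  have hBin2 : qBin (qq ^ 2) (2*k) k = φ Cp / φ Ep := by
    rw [qBin, if_pos (by omega), qP, qP, hCp, hEp, map_prod, map_prod]
    congr 1
    · refine Finset.prod_congr rfl (fun i _ => ?_)
      rw [map_sub, map_one, map_pow, hφX, ← pow_mul, ← pow_mul, ← pow_add]
      rw [show 2*(2*k - k + 1) + 2*i = 2*k+2+2*i from by omega]
    · refine Finset.prod_congr rfl (fun i _ => ?_)
      rw [map_sub, map_one, map_pow, hφX, ← pow_mul, ← pow_add]
      rw [show 2 + 2*i = 2*i+2 from by omega]
  have hPq : qP (-qq) qq (2*k) = φ Pp := by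
    rw [qP, hPp, map_prod]
    refine Finset.prod_congr rfl (fun i _ => ?_)
    rw [map_add, map_one, map_pow, hφX]
    ring
  -- RHS as φ Mp / φ Dp
  have hR : (-1) ^ k * qBin (qq ^ 2) (2*k) k * qq ^ (k * p - k ^ 2) /
        (qP (-qq) qq (2*k)) ^ 2 = φ Mp / φ Dp := by
    rw [hBin2, hPq, hMp, hqpow (k*p - k^2)]
    have hPIK : φ Cp * φ Dp = φ Op ^ 2 * φ Ep * φ Pp ^ 2 := by
      have h0 := PI k
      rw [Finset.prod_pow] at h0
      have h1 := congrArg φ h0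
      rw [map_mul, map_mul, map_mul, map_pow, map_pow] at h1
      exact h1
    simp only [map_mul, map_pow, map_neg, map_one]
    field_simp
    ring_nf
    rw [div_eq_div_iff (pow_ne_zero _ hφP) hφD]
    have hE1 : (φ Ep)⁻¹ * φ Ep = 1 := inv_mul_cancel₀ hφE
    have hPIK' : @Eq (RatFunc ℚ) (φ Cp * φ Dp) (φ Op ^ 2 * φ Ep * φ Pp ^ 2) := hPIK
    have hE1' : @Eq (RatFunc ℚ) ((φ Ep)⁻¹ * φ Ep) 1 := hE1
    show @Eq (RatFunc ℚ) _ _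
    linear_combination ((φ X^(k*p-k^2) * (-1)^k * (φ Ep)⁻¹ : RatFunc ℚ)) * hPIK' +
      ((φ X^(k*p-k^2) * (-1)^k * φ Op^2 * φ Pp^2 : RatFunc ℚ)) * hE1'
  -- the key congruence
  obtain ⟨A0, hA0⟩ := key_dvd p k h2k
  rw [Finset.prod_pow, ← hOp, ← hNp] at hA0
  have hkk : k^2 ≤ k*p := by rw [pow_two]; exact Nat.mul_le_mul_left k (by omega)
  have hx : (X:Polynomial ℚ)^(k*p-k^2) * X^(k^2) = X^(k*p) := by
    rw [← pow_add, show k*p-k^2+k^2 = k*p from by omega]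
  have hMX : Mp * X^(k^2) = (-1)^k * X^(k*p) * Op^2 := by
    rw [hMp, show ((-1:Polynomial ℚ)^k * X^(k*p-k^2) * Op^2) * X^(k^2)
      = (-1)^k * (X^(k*p-k^2) * X^(k^2)) * Op^2 from by ring, hx]
  have hNM : (Np - Mp) * X^(k^2) = (Phi p)^2 * ((X - 1)^2 * A0) := by
    have h1 : ((Phi p)^2) * ((X - 1)^2 * A0) = ((X^p - 1)^2) * A0 := by
      rw [← Phi_mul p]; ring
    rw [h1, ← hA0, sub_mul, hMX]
  refine ⟨(X - 1)^2 * A0, Dp * X^(k^2), ?_, ?_⟩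
  · -- coprimality
    have hirr := Phi_irr p hp
    rw [isCoprime_comm, hirr.coprime_iff_not_dvd]
    intro hdvd
    have hprime : Prime (Phi p) := hirr.prime
    rcases (hprime.dvd_mul).mp hdvd with h | h
    · -- Phi p ∣ Dp
      obtain ⟨i, hi, hdi⟩ := (hprime.dvd_finset_prod_iff _).mp h
      rw [Finset.mem_range] at hi
      have hneg : Phi p ∣ X^(2*i+2) - 1 := by
        have := hdi.neg_right
        rwa [neg_sub] at this
      have hpd := Phi_dvd_imp p hp hp3 _ hneg
      have h2' : p ∣ 2*(i+1) := by rwa [show 2*i+2 = 2*(i+1) from by ring] at hpd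
      rcases (Nat.Prime.dvd_mul hp).mp h2' with h' | h'
      · have := Nat.le_of_dvd (by norm_num) h'; omega
      · have := Nat.le_of_dvd (by omega) h'; omega
    · -- Phi p ∣ X^(k^2)
      have := hprime.dvd_of_dvd_pow h
      have hdeg := Polynomial.natDegree_le_of_dvd this X_ne_zero
      rw [Phi_natDegree p hp, natDegree_X] at hdeg
      omega
  · -- the equation
    have hNMK := congrArg φ hNM
    rw [hL, hR, div_sub_div_same, show algebraMap (Polynomial ℚ) (RatFunc ℚ) = φ from rfl]
    simp only [hMp, map_mul, map_sub, map_pow, map_one, map_neg] at hNMK ⊢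
    field_simp
    linear_combination hNMK
end

section
/- Let n be a nonnegative integer. Then Σ_{k=0}^{n} (-1)^{n-k} [n choose k]_q · (aq^n;q)_k · q^{binom(n-k+1,2)} / ((a;q)_k (1 - x q^{-k})) = (ax;q)_n (q;q)_n / ((a;q)_n (x q^{-n}; q)_{n+1}), as an identity of rational functions in q, a, x. -/
set_option synthInstance.maxHeartbeats 1000000
set_option maxHeartbeats 4000000


open Finset Polynomial

/-- The field of rational functions in three variables `q3`, `a3`, `x3` over `ℚ`. -/
noncomputable def q3 : RatFunc (RatFunc (RatFunc ℚ)) := RatFunc.C (RatFunc.C RatFunc.X)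
noncomputable def a3 : RatFunc (RatFunc (RatFunc ℚ)) := RatFunc.C RatFunc.X
noncomputable def x3 : RatFunc (RatFunc (RatFunc ℚ)) := RatFunc.X

theorem qP_map {K L : Type*} [Field K] [Field L] (f : K →+* L) (a q : K) (n : ℕ) :
    f (qP a q n) = qP (f a) (f q) n := by
  simp [qP, map_prod]

theorem qP_add {K : Type*} [Field K] (a q : K) (m l : ℕ) :
    qP a q (m + l) = qP a q m * qP (a * q ^ m) q l := by
  rw [qP, Finset.prod_range_add]
  congr 1
  exact Finset.prod_congr rfl fun i _ => by rw [pow_add]; ring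

theorem qP_ne_zero {K : Type*} [Field K] {a q : K} {n : ℕ}
    (h : ∀ i, 1 - a * q ^ i ≠ 0) : qP a q n ≠ 0 :=
  Finset.prod_ne_zero_iff.2 fun i _ => h i

theorem one_sub_X_mul_C_ne_zero {K : Type*} [Field K] (e : K) :
    1 - RatFunc.X * RatFunc.C e ≠ 0 := by
  intro h
  have h2 : algebraMap (Polynomial K) (RatFunc K)
      (1 - Polynomial.X * Polynomial.C e) = 0 := by
    rw [map_sub, map_mul, map_one, RatFunc.algebraMap_C, RatFunc.algebraMap_X]
    exact h
  rw [map_eq_zero_iff _ (RatFunc.algebraMap_injective K)] at h2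
  have := congrArg (Polynomial.coeff · 0) h2
  simp at this

theorem X_pow_injF {K : Type*} [Field K] {i j : ℕ}
    (h : (RatFunc.X : RatFunc K) ^ i = RatFunc.X ^ j) : i = j := by
  have h2 : algebraMap (Polynomial K) (RatFunc K) (Polynomial.X ^ i)
      = algebraMap (Polynomial K) (RatFunc K) (Polynomial.X ^ j) := by
    rw [map_pow, map_pow, RatFunc.algebraMap_X]; exact h
  have h3 := RatFunc.algebraMap_injective K h2
  have := congrArg Polynomial.natDegree h3
  simpa using this

noncomputable abbrev FF : Type := RatFunc (RatFunc ℚ)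
noncomputable def qF : FF := RatFunc.C RatFunc.X
noncomputable def aF : FF := RatFunc.X

theorem qF_ne_zero : qF ≠ 0 := by
  intro h
  have h2 : (RatFunc.X : RatFunc ℚ) = 0 :=
    (RatFunc.C : RatFunc ℚ →+* FF).injective (by rw [map_zero]; exact h)
  exact RatFunc.X_ne_zero h2

theorem qF_pow_inj {i j : ℕ} (h : qF ^ i = qF ^ j) : i = j := by
  rw [qF, ← map_pow, ← map_pow] at h
  exact X_pow_injF ((RatFunc.C : RatFunc ℚ →+* FF).injective h)

theorem one_sub_qF_pow_ne_zero {i : ℕ} (hi : 1 ≤ i) : 1 - qF ^ i ≠ 0 := by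
  intro h
  have h2 : qF ^ i = qF ^ 0 := by rw [pow_zero]; linear_combination -h
  have := qF_pow_inj h2
  omega

theorem one_sub_aF_qF_ne_zero (i : ℕ) : 1 - aF * qF ^ i ≠ 0 := by
  rw [aF, qF, ← map_pow]
  exact one_sub_X_mul_C_ne_zero _

theorem qP_q_ne_zero (m : ℕ) : qP qF qF m ≠ 0 :=
  qP_ne_zero fun i => by
    rw [← pow_succ']; exact one_sub_qF_pow_ne_zero (by omega)

theorem qP_a_ne_zero (m : ℕ) : qP aF qF m ≠ 0 :=
  qP_ne_zero fun i => one_sub_aF_qF_ne_zero i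

noncomputable def cc (n k : ℕ) : FF :=
  (-1) ^ (n - k) * qBin qF n k * qP (aF * qF ^ n) qF k *
      qF ^ ((n - k + 1) * (n - k) / 2) / qP aF qF k

theorem hA (k : ℕ) :
    ∏ j ∈ Finset.range k, (1 - (qF ^ j)⁻¹ * qF ^ k) = qP qF qF k := by
  rw [qP, ← Finset.prod_range_reflect (fun i => 1 - qF * qF ^ i) k]
  refine Finset.prod_congr rfl fun j hj => ?_
  rw [Finset.mem_range] at hj
  have h1 : qF * qF ^ (k - 1 - j) = qF ^ (k - j) := by
    rw [← pow_succ']; congr 1; omega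
  rw [h1, pow_sub₀ qF qF_ne_zero (le_of_lt hj)]
  ring

theorem hB (d : ℕ) (k : ℕ) :
    ∏ j ∈ Finset.Ico (k + 1) (k + 1 + d), (1 - (qF ^ j)⁻¹ * qF ^ k) =
      (-1) ^ d * (qF ^ ((d + 1) * d / 2))⁻¹ * qP qF qF d := by
  rw [Finset.prod_Ico_eq_prod_range]
  simp only [Nat.add_sub_cancel_left]
  have step : ∀ j, (1 - (qF ^ (k + 1 + j))⁻¹ * qF ^ k) =
      -(qF ^ (j + 1))⁻¹ * (1 - qF ^ (j + 1)) := by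
    intro j
    have h1 : qF ^ (k + 1 + j) = qF ^ (j + 1) * qF ^ k := by
      rw [← pow_add]; congr 1; omega
    have hk0 : qF ^ k ≠ 0 := pow_ne_zero _ qF_ne_zero
    have hj0 : qF ^ (j + 1) ≠ 0 := pow_ne_zero _ qF_ne_zero
    field_simp [h1]
    ring
  rw [Finset.prod_congr rfl fun j _ => step j, Finset.prod_mul_distrib]
  congr 1
  · have h2 : ∀ x : ℕ, -(qF ^ (x + 1))⁻¹ = (-1) * (qF ^ (x + 1))⁻¹ := fun x => by ring
    rw [Finset.prod_congr rfl fun x _ => h2 x, Finset.prod_mul_distrib,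
      Finset.prod_const, Finset.card_range]
    congr 1
    rw [Finset.prod_inv_distrib]
    congr 1
    rw [Finset.prod_pow_eq_pow_sum]
    congr 1
    have h3 : ∑ x ∈ Finset.range d, (x + 1) = ∑ x ∈ Finset.range (d + 1), x := by
      rw [Finset.sum_range_succ' (fun x => x) d]; omega
    rw [h3, Finset.sum_range_id]
    congr 2
  · rw [qP]
    exact Finset.prod_congr rfl fun i _ => by rw [← pow_succ']

theorem key (n k : ℕ) (hk : k ≤ n) :
    cc n k * ∏ j ∈ (Finset.range (n + 1)).erase k, (1 - (qF ^ j)⁻¹ * qF ^ k) =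
      qP qF qF n / qP aF qF n * qP (aF * qF ^ k) qF n := by
  have hset : (Finset.range (n + 1)).erase k =
      Finset.range k ∪ Finset.Ico (k + 1) (k + 1 + (n - k)) := by
    ext j
    simp only [Finset.mem_erase, Finset.mem_range, Finset.mem_union, Finset.mem_Ico]
    omega
  have hdisj : Disjoint (Finset.range k) (Finset.Ico (k + 1) (k + 1 + (n - k))) := by
    rw [Finset.disjoint_left]
    intro j hj1 hj2
    rw [Finset.mem_range] at hj1
    rw [Finset.mem_Ico] at hj2
    omega
  rw [hset, Finset.prod_union hdisj, hA k, hB (n - k) k, cc, qBin, if_pos hk]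
  set d := n - k with hd
  have hn : n = d + k := by omega
  have hqq : qP qF qF n = qP qF qF d * qP (qF ^ (d + 1)) qF k := by
    rw [hn, qP_add, pow_succ']
  have haa : qP aF qF n * qP (aF * qF ^ n) qF k = qP aF qF k * qP (aF * qF ^ k) qF n := by
    rw [← qP_add, ← qP_add]
    congr 1
    omega
  have Zq1 : qP qF qF k ≠ 0 := qP_q_ne_zero k
  have Zq2 : qP qF qF d ≠ 0 := qP_q_ne_zero d
  have Zq3 : qP qF qF n ≠ 0 := qP_q_ne_zero n
  have Za1 : qP aF qF k ≠ 0 := qP_a_ne_zero k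
  have Za2 : qP aF qF n ≠ 0 := qP_a_ne_zero n
  have Zp : qF ^ ((d + 1) * d / 2) ≠ 0 := pow_ne_zero _ qF_ne_zero
  have hsq : ((-1 : FF) ^ d) * (-1) ^ d = 1 := by
    rw [← pow_add]
    exact Even.neg_one_pow ⟨d, rfl⟩
  field_simp
  set T := qF ^ ((d + 1) * d / 2)
  set P1 := qP (qF ^ (d + 1)) qF k
  set P2 := qP (aF * qF ^ n) qF k
  set P3 := qP (aF * qF ^ k) qF n
  set Qk := qP qF qF k
  set Qd := qP qF qF d
  set Qn := qP qF qF n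
  set Ak := qP aF qF k
  set An := qP aF qF n
  linear_combination (P1 * P2 * Qd * An) * hsq + (P1 * Qd) * haa +
    (-(Ak * P3)) * hqq

theorem deg_one_sub_C_mul_X (u : FF) : (1 - Polynomial.C u * Polynomial.X).degree ≤ 1 := by
  refine le_trans (Polynomial.degree_sub_le _ _) (max_le ?_ ?_)
  · exact le_trans Polynomial.degree_one_le (by norm_num)
  · refine le_trans (Polynomial.degree_mul_le _ _) ?_
    refine le_trans (add_le_add Polynomial.degree_C_le Polynomial.degree_X_le) ?_
    norm_num

theorem deg_prod_le (s : Finset ℕ) (u : ℕ → FF) :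
    (∏ j ∈ s, (1 - Polynomial.C (u j) * Polynomial.X)).degree ≤ (s.card : WithBot ℕ) := by
  refine le_trans (Polynomial.degree_prod_le _ _) ?_
  refine le_trans (Finset.sum_le_sum fun j _ => deg_one_sub_C_mul_X (u j)) ?_
  simp [Finset.sum_const, nsmul_eq_mul]

theorem claimA (n : ℕ) :
    (∑ k ∈ Finset.range (n + 1), Polynomial.C (cc n k) *
        ∏ j ∈ (Finset.range (n + 1)).erase k,
          (1 - Polynomial.C ((qF ^ j)⁻¹) * Polynomial.X)) =
      Polynomial.C (qP qF qF n / qP aF qF n) *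
        ∏ i ∈ Finset.range n, (1 - Polynomial.C (aF * qF ^ i) * Polynomial.X) := by
  apply Polynomial.eq_of_degrees_lt_of_eval_index_eq (v := fun k => qF ^ k)
      (Finset.range (n + 1))
  · exact fun i _ j _ h => qF_pow_inj h
  · rw [Finset.card_range]
    refine lt_of_le_of_lt (Polynomial.degree_sum_le _ _) ?_
    rw [Finset.sup_lt_iff (by exact_mod_cast WithBot.bot_lt_coe (n + 1))]
    intro k hk
    refine lt_of_le_of_lt (Polynomial.degree_mul_le _ _) ?_
    refine lt_of_le_of_lt (add_le_add Polynomial.degree_C_le (deg_prod_le _ _)) ?_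
    rw [Finset.card_erase_of_mem hk, Finset.card_range]
    simp only [zero_add]
    exact_mod_cast Nat.lt_succ_self n
  · rw [Finset.card_range]
    refine lt_of_le_of_lt (Polynomial.degree_mul_le _ _) ?_
    refine lt_of_le_of_lt (add_le_add Polynomial.degree_C_le (deg_prod_le _ _)) ?_
    rw [Finset.card_range]
    simp only [zero_add]
    exact_mod_cast Nat.lt_succ_self n
  · intro k hk
    rw [Finset.mem_range] at hk
    have hk' : k ≤ n := by omega
    simp only [Polynomial.eval_finset_sum, Polynomial.eval_mul, Polynomial.eval_prod,
      Polynomial.eval_sub, Polynomial.eval_one, Polynomial.eval_C, Polynomial.eval_X]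
    rw [Finset.sum_eq_single_of_mem k (Finset.mem_range.2 hk)]
    · rw [key n k hk']
      congr 1
      rw [qP]
      exact Finset.prod_congr rfl fun i _ => by ring
    · intro b hb hbk
      apply mul_eq_zero_of_right
      refine Finset.prod_eq_zero (Finset.mem_erase.2 ⟨fun h => hbk h.symm, Finset.mem_range.2 hk⟩) ?_
      rw [inv_mul_cancel₀ (pow_ne_zero _ qF_ne_zero), sub_self]

noncomputable def CK : FF →+* RatFunc FF := RatFunc.C

theorem q3_eq : q3 = CK qF := rfl
theorem a3_eq : a3 = CK aF := rfl
theorem x3_eq : x3 = RatFunc.X := rfl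

noncomputable def G (j : ℕ) : RatFunc FF := 1 - x3 * RatFunc.C ((qF ^ j)⁻¹)

theorem G_ne_zero (j : ℕ) : G j ≠ 0 := by
  rw [G, x3_eq]; exact one_sub_X_mul_C_ne_zero _

theorem qBin_map {K L : Type*} [Field K] [Field L] (f : K →+* L) (q : K) (n k : ℕ) :
    f (qBin q n k) = qBin (f q) n k := by
  rw [qBin, qBin, apply_ite f, map_div₀, qP_map, qP_map, map_pow, map_zero]

theorem q3_zpow (k : ℕ) : q3 ^ (-(k : ℤ)) = RatFunc.C ((qF ^ k)⁻¹) := by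
  have h1 : q3 ^ (-(k : ℤ)) = (q3 ^ (k : ℤ))⁻¹ := zpow_neg q3 (k : ℤ)
  rw [h1, zpow_natCast, q3_eq, CK, ← map_pow, map_inv₀]

theorem term_eq (n k : ℕ) :
    (-1) ^ (n - k) * qBin q3 n k * qP (a3 * q3 ^ n) q3 k *
        q3 ^ ((n - k + 1) * (n - k) / 2) /
      (qP a3 q3 k * (1 - x3 * q3 ^ (-(k : ℤ)))) = RatFunc.C (cc n k) / G k := by
  rw [q3_zpow, ← G]
  have h1 : (-1 : RatFunc FF) ^ (n - k) * qBin q3 n k * qP (a3 * q3 ^ n) q3 k *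
      q3 ^ ((n - k + 1) * (n - k) / 2) =
      CK ((-1) ^ (n - k) * qBin qF n k * qP (aF * qF ^ n) qF k *
        qF ^ ((n - k + 1) * (n - k) / 2)) := by
    rw [map_mul, map_mul, map_mul, map_pow, map_neg, map_one, qBin_map, ← q3_eq,
      qP_map, map_mul, map_pow, ← q3_eq, ← a3_eq, map_pow, ← q3_eq]
  have h3 : (RatFunc.C (cc n k) : RatFunc FF) =
      CK ((-1) ^ (n - k) * qBin qF n k * qP (aF * qF ^ n) qF k *
        qF ^ ((n - k + 1) * (n - k) / 2)) / CK (qP aF qF k) := by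
    rw [cc, map_div₀]; rfl
  have h2 : qP a3 q3 k = CK (qP aF qF k) := by
    rw [qP_map, ← q3_eq, ← a3_eq]
  rw [h1, h2, h3]
  ring

theorem prod_G (n : ℕ) :
    qP (x3 * q3 ^ (-(n : ℤ))) q3 (n + 1) = ∏ j ∈ Finset.range (n + 1), G j := by
  rw [← Finset.prod_range_reflect G (n + 1), qP]
  refine Finset.prod_congr rfl fun i hi => ?_
  rw [Finset.mem_range] at hi
  rw [q3_zpow n, G]
  have hstep : ∀ m : ℕ, ((qF ^ m)⁻¹ : FF) = (qF ^ (m + i))⁻¹ * qF ^ i := fun m => by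
    rw [pow_add, mul_inv, mul_assoc, inv_mul_cancel₀ (pow_ne_zero _ qF_ne_zero), mul_one]
  have hni : n + 1 - 1 - i + i = n := by omega
  have hkey : (RatFunc.C ((qF ^ (n + 1 - 1 - i))⁻¹) : RatFunc FF) =
      RatFunc.C ((qF ^ n)⁻¹) * q3 ^ i := by
    rw [hstep (n + 1 - 1 - i), hni, map_mul, q3_eq, CK, map_pow]
  rw [hkey]
  ring

theorem q3_eq' : q3 = RatFunc.C qF := rfl

instance : NoZeroDivisors (RatFunc FF) := by
  have : IsDomain (RatFunc FF) := inferInstance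
  exact this.to_noZeroDivisors

theorem stmt_6 (n : ℕ) :
    ∑ k ∈ Finset.range (n + 1),
        (-1) ^ (n - k) * qBin q3 n k * qP (a3 * q3 ^ n) q3 k *
            q3 ^ ((n - k + 1) * (n - k) / 2) /
          (qP a3 q3 k * (1 - x3 * q3 ^ (-(k : ℤ)))) =
      qP (a3 * x3) q3 n * qP q3 q3 n /
        (qP a3 q3 n * qP (x3 * q3 ^ (-(n : ℤ))) q3 (n + 1)) := by
  have hProd : (∏ j ∈ Finset.range (n + 1), G j) ≠ 0 :=
    Finset.prod_ne_zero_iff.2 fun j _ => G_ne_zero j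
  have h1 : ∑ k ∈ Finset.range (n + 1),
      (-1) ^ (n - k) * qBin q3 n k * qP (a3 * q3 ^ n) q3 k *
          q3 ^ ((n - k + 1) * (n - k) / 2) /
        (qP a3 q3 k * (1 - x3 * q3 ^ (-(k : ℤ)))) =
      ∑ k ∈ Finset.range (n + 1),
        RatFunc.C (cc n k) * (∏ j ∈ (Finset.range (n + 1)).erase k, G j) /
          ∏ j ∈ Finset.range (n + 1), G j := by
    refine Finset.sum_congr rfl fun k hk => ?_
    have hrk : (∏ j ∈ (Finset.range (n + 1)).erase k, G j) ≠ 0 :=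
      Finset.prod_ne_zero_iff.2 fun j _ => G_ne_zero j
    rw [term_eq n k, ← Finset.mul_prod_erase _ G hk]
    rw [mul_comm (G k) (∏ j ∈ (Finset.range (n + 1)).erase k, G j),
      mul_comm (∏ j ∈ (Finset.range (n + 1)).erase k, G j) (G k)]
    exact (mul_div_mul_right (RatFunc.C (cc n k)) (G k) hrk).symm
  have hsd := Finset.sum_div (Finset.range (n + 1))
    (fun k => RatFunc.C (cc n k) * ∏ j ∈ (Finset.range (n + 1)).erase k, G j)
    (∏ j ∈ Finset.range (n + 1), G j)
  rw [h1, ← hsd]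
  have hmap := congrArg (algebraMap (Polynomial FF) (RatFunc FF)) (claimA n)
  simp only [map_sum, map_mul, map_prod, map_sub, map_one, RatFunc.algebraMap_C,
    RatFunc.algebraMap_X] at hmap
  have e1 : ∀ k, ∏ j ∈ (Finset.range (n + 1)).erase k, G j =
      ∏ j ∈ (Finset.range (n + 1)).erase k,
        (1 - RatFunc.C ((qF ^ j)⁻¹) * RatFunc.X) :=
    fun k => Finset.prod_congr rfl fun j _ => by rw [G, x3_eq]; ring
  have a3_eq'' : a3 = RatFunc.C aF := rfl
  have e2 : qP (a3 * x3) q3 n =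
      ∏ i ∈ Finset.range n, (1 - RatFunc.C aF * RatFunc.C (qF ^ i) * RatFunc.X) := by
    rw [qP]
    refine Finset.prod_congr rfl fun i _ => ?_
    rw [map_pow, ← q3_eq', ← a3_eq'', ← x3_eq]
    ring
  have hnum : (∑ k ∈ Finset.range (n + 1),
      RatFunc.C (cc n k) * ∏ j ∈ (Finset.range (n + 1)).erase k, G j) =
      qP (a3 * x3) q3 n * RatFunc.C (qP qF qF n / qP aF qF n) := by
    calc (∑ k ∈ Finset.range (n + 1),
        RatFunc.C (cc n k) * ∏ j ∈ (Finset.range (n + 1)).erase k, G j)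
        = ∑ k ∈ Finset.range (n + 1), RatFunc.C (cc n k) *
            ∏ j ∈ (Finset.range (n + 1)).erase k,
              (1 - RatFunc.C ((qF ^ j)⁻¹) * RatFunc.X) := by
          exact Finset.sum_congr rfl fun k _ => by rw [e1]
      _ = RatFunc.C (qP qF qF n / qP aF qF n) *
            ∏ i ∈ Finset.range n,
              (1 - RatFunc.C aF * RatFunc.C (qF ^ i) * RatFunc.X) := hmap
      _ = qP (a3 * x3) q3 n * RatFunc.C (qP qF qF n / qP aF qF n) := by
          rw [e2]; ring
  rw [hnum, prod_G n]
  have hq : qP q3 q3 n = RatFunc.C (qP qF qF n) := by rw [qP_map, q3_eq']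
  have ha : qP a3 q3 n = RatFunc.C (qP aF qF n) := by
    rw [qP_map, q3_eq', a3_eq]; rfl
  have hdiv : (RatFunc.C (qP qF qF n / qP aF qF n) : RatFunc FF) =
      RatFunc.C (qP qF qF n) / RatFunc.C (qP aF qF n) := by
    have := map_div₀ (RatFunc.C : FF →+* RatFunc FF) (qP qF qF n) (qP aF qF n); exact this
  rw [hdiv, ← hq, ← ha]
  ring
end

section
/- Let p be an odd prime and s an integer with 0 ≤ s ≤ (p-1)/2. Then Σ_{k=0}^{(p-1)/2} (q;q^2)_k (q;q^2)_{k+s} / ((q^2;q^2)_k (q^2;q^2)_{k+s}) is congruent to (-1)^{(p-1)/2} q^{(1-p^2)/4} modulo (1+q+...+q^{p-1})^2. -/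
open Finset Polynomial

namespace Stmt16

local notation "K" => RatFunc ℚ
local notation "am" => algebraMap (Polynomial ℚ) (RatFunc ℚ)

lemma am_X : am X = qq := RatFunc.algebraMap_X

lemma am_inj : Function.Injective (am) := RatFunc.algebraMap_injective ℚ

lemma phi_mul (p : ℕ) : Phi p * (X - 1) = X ^ p - 1 := geom_sum_mul X p

lemma phi_irr {p : ℕ} (hp : p.Prime) : Irreducible (Phi p) := by
  haveI : Fact p.Prime := ⟨hp⟩
  rw [Phi, ← Polynomial.cyclotomic_prime ℚ p]
  exact Polynomial.cyclotomic.irreducible_rat hp.pos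

lemma phi_not_dvd {p m : ℕ} (hp : p.Prime) (hm : ¬ p ∣ m) :
    ¬ (Phi p ∣ (1 - X ^ m : Polynomial ℚ)) := by
  intro hdvd
  set ζ : ℂ := Complex.exp (2 * Real.pi * Complex.I / p)
  have hζ : IsPrimitiveRoot ζ p := Complex.isPrimitiveRoot_exp p hp.pos.ne'
  have hroot : (Polynomial.aeval ζ) (Phi p) = 0 := by
    have h1 : (Polynomial.aeval ζ) (Phi p) * (ζ - 1) = ζ ^ p - 1 := by
      have := congrArg (Polynomial.aeval ζ) (phi_mul p)
      simpa using this
    have h2 : ζ ^ p = 1 := hζ.pow_eq_one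
    have h3 : ζ ≠ 1 := hζ.ne_one hp.one_lt
    have h4 : (Polynomial.aeval ζ) (Phi p) * (ζ - 1) = 0 := by rw [h1, h2, sub_self]
    rcases mul_eq_zero.mp h4 with h | h
    · exact h
    · exact absurd (sub_eq_zero.mp h) h3
  obtain ⟨C, hC⟩ := hdvd
  have : (1 : ℂ) - ζ ^ m = 0 := by
    have := congrArg (Polynomial.aeval ζ) hC
    simpa [hroot] using this
  exact hm (hζ.dvd_of_pow_eq_one m (by have := sub_eq_zero.mp this; exact this.symm))

lemma coprime_one_sub_pow {p m : ℕ} (hp : p.Prime) (hm : ¬ p ∣ m) :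
    IsCoprime ((1 : Polynomial ℚ) - X ^ m) (Phi p) :=
  ((phi_irr hp).coprime_iff_not_dvd.mpr (phi_not_dvd hp hm)).symm

lemma am_pow_X (m : ℕ) : am (X ^ m) = qq ^ m := by rw [map_pow, am_X]

lemma qq_pow_ne_one {m : ℕ} (hm : m ≠ 0) : qq ^ m ≠ 1 := by
  intro h
  have : am (X ^ m) = am 1 := by rw [am_pow_X, h, map_one]
  have hX : (X : Polynomial ℚ) ^ m = 1 := am_inj this
  have := congrArg Polynomial.natDegree hX
  simp [Polynomial.natDegree_X_pow] at this
  exact hm this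

lemma one_sub_qq_pow_ne {m : ℕ} (hm : m ≠ 0) : (1 : RatFunc ℚ) - qq ^ m ≠ 0 := by
  intro h
  exact qq_pow_ne_one hm (by linear_combination -h)

/-- Rational functions whose denominator can be chosen coprime to `Phi p`. -/
def Good (p : ℕ) (f : RatFunc ℚ) : Prop :=
  ∃ N D : Polynomial ℚ, IsCoprime D (Phi p) ∧ f * am D = am N

lemma good_am (p : ℕ) (N : Polynomial ℚ) : Good p (am N) :=
  ⟨N, 1, isCoprime_one_left, by simp⟩

lemma good_one (p : ℕ) : Good p 1 := by simpa using good_am p 1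

lemma good_qq_pow (p m : ℕ) : Good p (qq ^ m) := by
  have := good_am p (X ^ m)
  rwa [am_pow_X] at this

lemma Good.mul {p : ℕ} {f g : RatFunc ℚ} (hf : Good p f) (hg : Good p g) :
    Good p (f * g) := by
  obtain ⟨N1, D1, h1, e1⟩ := hf
  obtain ⟨N2, D2, h2, e2⟩ := hg
  exact ⟨N1 * N2, D1 * D2, h1.mul_left h2, by
    rw [map_mul, map_mul]
    calc f * g * (am D1 * am D2) = (f * am D1) * (g * am D2) := by ring
    _ = am N1 * am N2 := by rw [e1, e2]⟩

lemma Good.add {p : ℕ} {f g : RatFunc ℚ} (hf : Good p f) (hg : Good p g) :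
    Good p (f + g) := by
  obtain ⟨N1, D1, h1, e1⟩ := hf
  obtain ⟨N2, D2, h2, e2⟩ := hg
  exact ⟨N1 * D2 + N2 * D1, D1 * D2, h1.mul_left h2, by
    rw [map_mul, map_add, map_mul, map_mul]
    calc (f + g) * (am D1 * am D2) = (f * am D1) * am D2 + (g * am D2) * am D1 := by ring
    _ = _ := by rw [e1, e2]⟩

lemma Good.neg {p : ℕ} {f : RatFunc ℚ} (hf : Good p f) : Good p (-f) := by
  obtain ⟨N, D, h, e⟩ := hf
  exact ⟨-N, D, h, by rw [map_neg, ← e]; ring⟩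

lemma Good.sub {p : ℕ} {f g : RatFunc ℚ} (hf : Good p f) (hg : Good p g) :
    Good p (f - g) := by
  simpa [sub_eq_add_neg] using hf.add hg.neg

lemma coprime_ne_zero {p : ℕ} (hp : p.Prime) {D : Polynomial ℚ} (h : IsCoprime D (Phi p)) :
    D ≠ 0 := by
  rintro rfl
  exact (phi_irr hp).not_isUnit (isCoprime_zero_left.mp h)

lemma good_inv {p : ℕ} (hp : p.Prime) {D : Polynomial ℚ} (h : IsCoprime D (Phi p)) :
    Good p (am D)⁻¹ := by
  refine ⟨1, D, h, ?_⟩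
  rw [inv_mul_cancel₀, map_one]
  intro h0
  exact coprime_ne_zero hp h (am_inj (by simpa using h0))

lemma good_sum {p : ℕ} {ι : Type*} (t : Finset ι) (f : ι → RatFunc ℚ)
    (h : ∀ i ∈ t, Good p (f i)) : Good p (∑ i ∈ t, f i) := by
  classical
  induction t using Finset.induction with
  | empty => simpa using good_am p 0
  | insert a t' hni ih =>
    rw [Finset.sum_insert hni]
    exact (h a (Finset.mem_insert_self a t')).add
      (ih fun i hi => h i (Finset.mem_insert_of_mem hi))

lemma good_prod {p : ℕ} {ι : Type*} (t : Finset ι) (f : ι → RatFunc ℚ)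
    (h : ∀ i ∈ t, Good p (f i)) : Good p (∏ i ∈ t, f i) := by
  classical
  induction t using Finset.induction with
  | empty => simpa using good_one p
  | insert a t' hni ih =>
    rw [Finset.prod_insert hni]
    exact (h a (Finset.mem_insert_self a t')).mul
      (ih fun i hi => h i (Finset.mem_insert_of_mem hi))

/- Congruence API -/

lemma cong_refl (p r : ℕ) (f : RatFunc ℚ) : CongrModPow f f p r :=
  ⟨0, 1, isCoprime_one_left, by simp⟩

lemma cong_symm {p r : ℕ} {f g : RatFunc ℚ} (h : CongrModPow f g p r) :
    CongrModPow g f p r := by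
  obtain ⟨A, B, hB, e⟩ := h
  refine ⟨-A, B, hB, ?_⟩
  have e2 : Phi p ^ r * -A = -(Phi p ^ r * A) := by ring
  rw [e2, map_neg, ← e]
  ring

lemma cong_trans {p r : ℕ} {f g h : RatFunc ℚ} (h1 : CongrModPow f g p r)
    (h2 : CongrModPow g h p r) : CongrModPow f h p r := by
  obtain ⟨A1, B1, hB1, e1⟩ := h1
  obtain ⟨A2, B2, hB2, e2⟩ := h2
  refine ⟨A1 * B2 + A2 * B1, B1 * B2, hB1.mul_left hB2, ?_⟩
  have e : (f - h) * am (B1 * B2) = ((f - g) * am B1) * am B2 + ((g - h) * am B2) * am B1 := by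
    rw [map_mul]; ring
  rw [e, e1, e2, ← map_mul, ← map_mul, ← map_add]
  congr 1
  ring

lemma cong_add {p r : ℕ} {f g f' g' : RatFunc ℚ} (h1 : CongrModPow f g p r)
    (h2 : CongrModPow f' g' p r) : CongrModPow (f + f') (g + g') p r := by
  obtain ⟨A1, B1, hB1, e1⟩ := h1
  obtain ⟨A2, B2, hB2, e2⟩ := h2
  refine ⟨A1 * B2 + A2 * B1, B1 * B2, hB1.mul_left hB2, ?_⟩
  have e : (f + f' - (g + g')) * am (B1 * B2)
      = ((f - g) * am B1) * am B2 + ((f' - g') * am B2) * am B1 := by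
    rw [map_mul]; ring
  rw [e, e1, e2, ← map_mul, ← map_mul, ← map_add]
  congr 1
  ring

lemma cong_sum {p r : ℕ} {n : ℕ} {f g : ℕ → RatFunc ℚ}
    (h : ∀ i < n, CongrModPow (f i) (g i) p r) :
    CongrModPow (∑ i ∈ range n, f i) (∑ i ∈ range n, g i) p r := by
  induction n with
  | zero => simpa using cong_refl p r 0
  | succ m ih =>
    rw [Finset.sum_range_succ, Finset.sum_range_succ]
    exact cong_add (ih fun i hi => h i (Nat.lt_succ_of_lt hi)) (h m (Nat.lt_succ_self m))

lemma cong_mul_good {p r : ℕ} {h f g : RatFunc ℚ} (hh : Good p h)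
    (hc : CongrModPow f g p r) : CongrModPow (h * f) (h * g) p r := by
  obtain ⟨N, D, hD, eD⟩ := hh
  obtain ⟨A, B, hB, e⟩ := hc
  refine ⟨N * A, D * B, hD.mul_left hB, ?_⟩
  have e2 : (h * f - h * g) * am (D * B) = (h * am D) * ((f - g) * am B) := by
    rw [map_mul]; ring
  rw [e2, eD, e, ← map_mul]
  congr 1
  ring

/-- The key way of producing congruences: the difference equals `Φ² ·` (a good element). -/
lemma cong_of_sub_eq {p : ℕ} {f g h : RatFunc ℚ} (hh : Good p h)
    (e : f - g = am ((Phi p) ^ 2) * h) : CongrModPow f g p 2 := by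
  obtain ⟨N, D, hD, eD⟩ := hh
  refine ⟨N, D, hD, ?_⟩
  rw [e, map_mul]
  calc am (Phi p ^ 2) * h * am D = am (Phi p ^ 2) * (h * am D) := by ring
  _ = _ := by rw [eD]

/- ### The basic q-Pochhammer quotients -/

noncomputable def PO (k : ℕ) : RatFunc ℚ := ∏ i ∈ range k, (1 - qq ^ (2*i+1))
noncomputable def PE (k : ℕ) : RatFunc ℚ := ∏ i ∈ range k, (1 - qq ^ (2*i+2))
noncomputable def cc (k : ℕ) : RatFunc ℚ := PO k / PE k

lemma qP_PO (k : ℕ) : qP qq (qq ^ 2) k = PO k := by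
  refine Finset.prod_congr rfl fun i _ => ?_
  ring

lemma qP_PE (k : ℕ) : qP (qq ^ 2) (qq ^ 2) k = PE k := by
  refine Finset.prod_congr rfl fun i _ => ?_
  ring

lemma PO_ne_zero (k : ℕ) : PO k ≠ 0 :=
  Finset.prod_ne_zero_iff.mpr fun i _ => one_sub_qq_pow_ne (by omega)

lemma PE_ne_zero (k : ℕ) : PE k ≠ 0 :=
  Finset.prod_ne_zero_iff.mpr fun i _ => one_sub_qq_pow_ne (by omega)

lemma PO_succ (m : ℕ) : PO (m+1) = PO m * (1 - qq ^ (2*m+1)) := Finset.prod_range_succ _ _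

lemma PE_succ (m : ℕ) : PE (m+1) = PE m * (1 - qq ^ (2*m+2)) := Finset.prod_range_succ _ _

lemma cc_zero : cc 0 = 1 := by simp [cc, PO, PE]

lemma cc_succ (m : ℕ) : cc (m+1) = cc m * (1 - qq ^ (2*m+1)) / (1 - qq ^ (2*m+2)) := by
  rw [cc, PO_succ, PE_succ, cc, mul_div_mul_comm]
  exact (mul_div_assoc _ _ _).symm

noncomputable def POp (k : ℕ) : Polynomial ℚ := ∏ i ∈ range k, (1 - X ^ (2*i+1))
noncomputable def PEp (k : ℕ) : Polynomial ℚ := ∏ i ∈ range k, (1 - X ^ (2*i+2))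

lemma am_POp (k : ℕ) : am (POp k) = PO k := by
  rw [POp, map_prod, PO]
  exact Finset.prod_congr rfl fun i _ => by rw [map_sub, map_one, am_pow_X]

lemma am_PEp (k : ℕ) : am (PEp k) = PE k := by
  rw [PEp, map_prod, PE]
  exact Finset.prod_congr rfl fun i _ => by rw [map_sub, map_one, am_pow_X]

lemma not_dvd_small {p m : ℕ} (hp : p.Prime) (h0 : 0 < m) (h2 : m < 2*p)
    (hne : m ≠ p) : ¬ p ∣ m := by
  intro hd
  obtain ⟨c, rfl⟩ := hd
  have hp2 : 2 ≤ p := hp.two_le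
  have hc : c < 2 := Nat.lt_of_mul_lt_mul_left (a := p) (by omega)
  interval_cases c <;> omega

lemma coprime_PEp {p : ℕ} (hp : p.Prime) (hodd : Odd p) {k : ℕ} (hk : k ≤ p - 1) :
    IsCoprime (PEp k) (Phi p) := by
  refine IsCoprime.prod_left fun i hi => coprime_one_sub_pow hp ?_
  have hi' : i < k := Finset.mem_range.mp hi
  have hodd' : p % 2 = 1 := Nat.odd_iff.mp hodd
  have hp2 : 2 ≤ p := hp.two_le
  refine not_dvd_small hp (by omega) (by omega) (by omega)

lemma good_cc {p : ℕ} (hp : p.Prime) (hodd : Odd p) {k : ℕ} (hk : k ≤ p - 1) :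
    Good p (cc k) := by
  have h : cc k = am (POp k) * (am (PEp k))⁻¹ := by
    rw [am_POp, am_PEp, cc, div_eq_mul_inv]
  rw [h]
  exact (good_am p _).mul (good_inv hp (coprime_PEp hp hodd hk))

/- ### The telescoping certificate -/

noncomputable def Gc (s : ℕ) : ℕ → RatFunc ℚ
  | 0 => 0
  | (k+1) => -qq ^ (2*s+1) * (1 - qq ^ (2*k+1)) / (1 - qq ^ (2*s+1)) * (cc k * cc (k+s+1))

lemma key (s k : ℕ) : cc k * cc (k+s+1) - cc k * cc (k+s) = Gc s (k+1) - Gc s k := by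
  have hY : (1 : RatFunc ℚ) - qq ^ (2*s+1) ≠ 0 := one_sub_qq_pow_ne (by omega)
  cases k with
  | zero =>
    have h1 : (1 : RatFunc ℚ) - qq ^ (2*s+2) ≠ 0 := one_sub_qq_pow_ne (by omega)
    rw [show (0:ℕ)+s+1 = s+1 by omega, show (0:ℕ)+s = s by omega]
    show cc 0 * cc (s+1) - cc 0 * cc s = Gc s 1 - Gc s 0
    rw [show Gc s 1 = -qq ^ (2*s+1) * (1 - qq ^ (2*0+1)) / (1 - qq ^ (2*s+1)) * (cc 0 * cc (0+s+1)) from rfl,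
      show Gc s 0 = 0 from rfl, cc_zero, show (0:ℕ)+s+1 = s+1 by omega, cc_succ s]
    field_simp
    ring
  | succ j =>
    have h1 : (1 : RatFunc ℚ) - qq ^ (2*j+2) ≠ 0 := one_sub_qq_pow_ne (by omega)
    have h2 : (1 : RatFunc ℚ) - qq ^ (2*(j+s+1)+2) ≠ 0 := one_sub_qq_pow_ne (by omega)
    show cc (j+1) * cc (j+1+s+1) - cc (j+1) * cc (j+1+s) = Gc s (j+2) - Gc s (j+1)
    rw [show Gc s (j+2) = -qq ^ (2*s+1) * (1 - qq ^ (2*(j+1)+1)) / (1 - qq ^ (2*s+1)) * (cc (j+1) * cc (j+1+s+1)) from rfl,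
      show Gc s (j+1) = -qq ^ (2*s+1) * (1 - qq ^ (2*j+1)) / (1 - qq ^ (2*s+1)) * (cc j * cc (j+s+1)) from rfl]
    rw [show j+1+s+1 = (j+s+1)+1 by omega, show j+1+s = j+s+1 by omega]
    rw [cc_succ (j+s+1), cc_succ j]
    field_simp
    ring

lemma sum_key (s N : ℕ) :
    ∑ k ∈ range (N+1), (cc k * cc (k+s+1) - cc k * cc (k+s)) = Gc s (N+1) := by
  have h := Finset.sum_range_sub (f := Gc s) (n := N+1)
  calc ∑ k ∈ range (N+1), (cc k * cc (k+s+1) - cc k * cc (k+s))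
      = ∑ k ∈ range (N+1), (Gc s (k+1) - Gc s k) :=
        Finset.sum_congr rfl fun k _ => key s k
    _ = Gc s (N+1) - Gc s 0 := h
    _ = Gc s (N+1) := by rw [show Gc s 0 = 0 from rfl, sub_zero]

/- ### The contiguous-parameter step -/

noncomputable def Ssum (n s : ℕ) : RatFunc ℚ := ∑ k ∈ range (n+1), cc k * cc (k+s)

lemma Ssum_sub (n s : ℕ) : Ssum n (s+1) - Ssum n s = Gc s (n+1) := by
  rw [Ssum, Ssum, ← Finset.sum_sub_distrib]
  exact sum_key s n

lemma coprime_qq_pow {p : ℕ} (hp : p.Prime) (m : ℕ) : IsCoprime ((X : Polynomial ℚ) ^ m) (Phi p) := by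
  refine IsCoprime.pow_left ?_
  refine ⟨-∑ i ∈ range (p-1), X ^ i, 1, ?_⟩
  have hp1 : p - 1 + 1 = p := by have := hp.two_le; omega
  have h := Finset.sum_range_succ' (fun i => (X : Polynomial ℚ) ^ i) (p-1)
  rw [hp1] at h
  have h2 : ∑ x ∈ range (p-1), (X:Polynomial ℚ) ^ (x+1) = (∑ i ∈ range (p-1), X ^ i) * X := by
    rw [Finset.sum_mul]
    exact Finset.sum_congr rfl fun i _ => pow_succ X i
  rw [one_mul, Phi, h, h2, pow_zero]
  ring

lemma step_cong {p n : ℕ} (hp : p.Prime) (hodd : Odd p) (hpn : p = 2*n+1) {s : ℕ}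
    (hs : s + 1 ≤ n) : CongrModPow (Ssum n (s+1)) (Ssum n s) p 2 := by
  have hp1 : n ≤ p - 1 := by omega
  have hp2 : n + s + 1 ≤ p - 1 := by omega
  have e2 : PO (n+s+1) = PO n *
      ((∏ j ∈ range s, (1 - qq ^ (2*n+2*j+3))) * (1 - qq^(2*n+1))) := by
    rw [PO, show n+s+1 = n+(s+1) by omega, Finset.prod_range_add, Finset.prod_range_succ']
    have ha : ∀ j ∈ range s, ((1:RatFunc ℚ) - qq^(2*(n+(j+1))+1)) = (1 - qq^(2*n+2*j+3)) :=
      fun j _ => by rw [show 2*(n+(j+1))+1 = 2*n+2*j+3 by omega]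
    rw [Finset.prod_congr rfl ha, show 2*(n+0)+1 = 2*n+1 by omega, PO]
  set E : RatFunc ℚ := am (X - 1) with hE
  set W : RatFunc ℚ := ∏ j ∈ range s, (1 - qq ^ (2*n+2*j+3)) with hW
  set h : RatFunc ℚ :=
    -(qq^(2*s+1) * E^2 * PO n * PO n * W) / (PE n * (PE (n+s+1) * (1 - qq^(2*s+1)))) with hh
  have hY : (1 : RatFunc ℚ) - qq ^ (2*s+1) ≠ 0 := one_sub_qq_pow_ne (by omega)
  refine cong_of_sub_eq (h := h) ?_ ?_
  · -- Good p h
    have hBp : IsCoprime (PEp n * (PEp (n+s+1) * (1 - X^(2*s+1)))) (Phi p) := by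
      refine IsCoprime.mul_left (coprime_PEp hp hodd hp1) ?_
      refine IsCoprime.mul_left (coprime_PEp hp hodd hp2) ?_
      exact coprime_one_sub_pow hp (not_dvd_small hp (by omega) (by omega) (by omega))
    have hrw : h = (-(qq^(2*s+1) * E^2 * PO n * PO n * W)) *
        (am (PEp n * (PEp (n+s+1) * (1 - X^(2*s+1)))))⁻¹ := by
      rw [map_mul, map_mul, map_sub, map_one, am_pow_X, am_PEp, am_PEp, hh, div_eq_mul_inv]
    rw [hrw]
    refine Good.mul (Good.neg ?_) (good_inv hp hBp)
    refine ((((good_qq_pow p _).mul ?_).mul ?_).mul ?_).mul ?_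
    · have := good_am p ((X - 1)^2)
      rwa [map_pow] at this
    · rw [← am_POp]; exact good_am p _
    · rw [← am_POp]; exact good_am p _
    · exact good_prod _ _ fun j _ => (good_one p).sub (good_qq_pow p _)
  · rw [Ssum_sub]
    have e1 : (1 : RatFunc ℚ) - qq^(2*n+1) = -(am (Phi p) * E) := by
      have h2 : am (Phi p) * E = qq ^ p - 1 := by
        rw [hE, ← map_mul, phi_mul, map_sub, map_one, am_pow_X]
      rw [show 2*n+1 = p from hpn.symm]
      linear_combination h2
    rw [show Gc s (n+1) = -qq ^ (2*s+1) * (1 - qq ^ (2*n+1)) / (1 - qq ^ (2*s+1)) *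
        (cc n * cc (n+s+1)) from rfl]
    rw [cc, cc, e2, e1, hh, map_pow]
    have h1 : PE n ≠ 0 := PE_ne_zero n
    have h2 : PE (n+s+1) ≠ 0 := PE_ne_zero (n+s+1)
    field_simp

lemma chain_cong {p n : ℕ} (hp : p.Prime) (hodd : Odd p) (hpn : p = 2*n+1) :
    ∀ d s, s + d = n → CongrModPow (Ssum n s) (Ssum n n) p 2 := by
  intro d
  induction d with
  | zero => intro s hs; rw [show s = n by omega]; exact cong_refl p 2 _
  | succ e ih =>
    intro s hs
    refine cong_trans (cong_symm (step_cong hp hodd hpn (by omega))) (ih (s+1) (by omega))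

/- ### Evaluation at s = n -/

noncomputable def Vp (p k : ℕ) : Polynomial ℚ := ∏ i ∈ range k, (1 - X ^ (p+2*i+1))
noncomputable def Up (p k : ℕ) : Polynomial ℚ := ∏ i ∈ range k, (1 - X ^ (p+2*i+2))

lemma am_ne_zero {f : Polynomial ℚ} (hf : f ≠ 0) : am f ≠ 0 := fun h =>
  hf (am_inj (by rw [h, map_zero]))

lemma coprime_Vp {p n : ℕ} (hp : p.Prime) (hodd : Odd p) (hpn : p = 2*n+1) {k : ℕ}
    (hk : k ≤ n) : IsCoprime (Vp p k) (Phi p) := by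
  refine IsCoprime.prod_left fun i hi => coprime_one_sub_pow hp ?_
  have hi' : i < k := Finset.mem_range.mp hi
  exact not_dvd_small hp (by omega) (by omega) (by omega)

lemma phi_dvd_key (p : ℕ) (j : ℕ) :
    Phi p ∣ (Vp p (j+1) * PEp (j+1) - (1 - X^(2*j+2)) * (POp (j+1) * Up p j)) := by
  have hdvd : Phi p ∣ (X : Polynomial ℚ)^p - 1 := ⟨X - 1, (phi_mul p).symm⟩
  rw [← Ideal.Quotient.eq_zero_iff_dvd]
  set π := Ideal.Quotient.mk (Ideal.span {Phi p}) with hπ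
  have hX : π ((X:Polynomial ℚ)^p) = π 1 := by
    rw [Ideal.Quotient.mk_eq_mk_iff_sub_mem, Ideal.mem_span_singleton]
    simpa using hdvd
  have hpow : ∀ m, π ((X:Polynomial ℚ)^(p+m)) = π (X^m) := fun m => by
    rw [pow_add, map_mul, hX, map_one, one_mul]
  have hV : π (Vp p (j+1)) = π (POp (j+1)) := by
    rw [Vp, POp, map_prod, map_prod]
    refine Finset.prod_congr rfl fun i _ => ?_
    rw [map_sub, map_sub, show p+2*i+1 = p+(2*i+1) by omega, hpow]
  have hU : π (Up p j) = π (PEp j) := by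
    rw [Up, PEp, map_prod, map_prod]
    refine Finset.prod_congr rfl fun i _ => ?_
    rw [map_sub, map_sub, show p+2*i+2 = p+(2*i+2) by omega, hpow]
  have hPE : PEp (j+1) = PEp j * (1 - X^(2*j+2)) := Finset.prod_range_succ _ _
  rw [map_sub, map_mul, map_mul, map_mul, hV, hU, hPE, map_mul]
  ring

lemma eval_term {p n : ℕ} (hp : p.Prime) (hodd : Odd p) (hpn : p = 2*n+1) {j : ℕ} (hj : j < n) :
    CongrModPow (cc (j+1) * cc (n+j+1))
      (-((qq^p - 1) * cc n * (1 - qq^(2*j+2))⁻¹)) p 2 := by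
  have hodd' : p % 2 = 1 := Nat.odd_iff.mp hodd
  obtain ⟨Aj, hAj⟩ := phi_dvd_key p j
  have hPOsplit : PO (n+j+1) = PO n * (am (Up p j) * (1 - qq^p)) := by
    rw [PO, show n+j+1 = n+(j+1) by omega, Finset.prod_range_add, Finset.prod_range_succ']
    have ha : ∀ i ∈ range j, ((1:RatFunc ℚ) - qq^(2*(n+(i+1))+1)) = (1 - qq^(p+2*i+2)) :=
      fun i _ => by rw [show 2*(n+(i+1))+1 = p+2*i+2 by omega]
    rw [Finset.prod_congr rfl ha, show 2*(n+0)+1 = p by omega, PO]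
    congr 2
    rw [Up, map_prod]
    exact Finset.prod_congr rfl fun i _ => by rw [map_sub, map_one, am_pow_X]
  have hPEsplit : PE (n+j+1) = PE n * am (Vp p (j+1)) := by
    rw [PE, show n+j+1 = n+(j+1) by omega, Finset.prod_range_add, PE]
    congr 1
    rw [Vp, map_prod]
    refine (Finset.prod_congr rfl fun i _ => ?_).symm
    rw [map_sub, map_one, am_pow_X, show p+2*i+1 = 2*(n+i)+2 by omega]
  have hVne : am (Vp p (j+1)) ≠ 0 := by
    intro h0
    have := PE_ne_zero (n+j+1)
    rw [hPEsplit, h0, mul_zero] at this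
    exact this rfl
  have hε : qq^p - 1 = am (Phi p) * am (X - 1) := by
    rw [← map_mul, phi_mul, map_sub, map_one, am_pow_X]
  have hN : am (Vp p (j+1)) * PE (j+1) - (1 - qq^(2*j+2)) * (PO (j+1) * am (Up p j))
      = am (Phi p) * am Aj := by
    have h := congrArg am hAj
    rw [map_sub, map_mul, map_mul, map_mul, map_sub, map_one, am_pow_X, am_PEp, am_POp,
      map_mul] at h
    exact h
  set h : RatFunc ℚ := cc n * am ((X-1) * Aj) /
      ((1 - qq^(2*j+2)) * (PE (j+1) * am (Vp p (j+1)))) with hh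
  refine cong_of_sub_eq (h := h) ?_ ?_
  · have hBp : IsCoprime ((1 - X^(2*j+2)) * (PEp (j+1) * Vp p (j+1))) (Phi p) := by
      refine IsCoprime.mul_left (coprime_one_sub_pow hp
        (not_dvd_small hp (by omega) (by omega) (by omega))) ?_
      exact IsCoprime.mul_left (coprime_PEp hp hodd (by omega))
        (coprime_Vp hp hodd hpn (by omega))
    have hden : ((1:RatFunc ℚ) - qq^(2*j+2)) * (PE (j+1) * am (Vp p (j+1)))
        = am ((1 - X^(2*j+2)) * (PEp (j+1) * Vp p (j+1))) := by
      rw [map_mul, map_sub, map_one, am_pow_X, map_mul, am_PEp]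
    have hrw : h = (cc n * am ((X-1) * Aj)) *
        (am ((1 - X^(2*j+2)) * (PEp (j+1) * Vp p (j+1))))⁻¹ := by
      rw [hh, hden, div_eq_mul_inv]
    rw [hrw]
    exact ((good_cc hp hodd (by omega)).mul (good_am p _)).mul (good_inv hp hBp)
  · rw [cc, cc, hPOsplit, hPEsplit, hh, map_pow, cc]
    have h1 : PE (j+1) ≠ 0 := PE_ne_zero (j+1)
    have h2 : PE n ≠ 0 := PE_ne_zero n
    have h3 : ((1:RatFunc ℚ) - qq^(2*j+2)) ≠ 0 := one_sub_qq_pow_ne (by omega)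
    have hε' : qq^p = am (Phi p) * am (X - 1) + 1 := by linear_combination hε
    have hN' : am (Vp p (j+1)) * PE (j+1)
        = am (Phi p) * am Aj + (1 - qq^(2*j+2)) * (PO (j+1) * am (Up p j)) := by
      linear_combination hN
    have hVeq : am (Vp p (j+1)) =
        (am (Phi p) * am Aj + (1 - qq^(2*j+2)) * (PO (j+1) * am (Up p j))) / PE (j+1) := by
      rw [eq_div_iff h1]
      linear_combination hN
    have hnum : am (Phi p) * am Aj + (1 - qq^(2*j+2)) * (PO (j+1) * am (Up p j)) ≠ 0 := by
      rw [← hN']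
      exact mul_ne_zero hVne h1
    have hm : am ((X-1) * Aj) = am (X - 1) * am Aj := map_mul _ _ _
    rw [hε', hVeq, hm]
    set D := am (Phi p) * am Aj + (1 - qq^(2*j+2)) * (PO (j+1) * am (Up p j)) with hD
    field_simp
    rw [hD]
    ring

lemma sum_aux (n : ℕ) : ∑ j ∈ range n, (2*j+2) = n*n+n := by
  induction n with
  | zero => simp
  | succ m ih => rw [Finset.sum_range_succ, ih]; ring

lemma lemA {p n : ℕ} (hpn : p = 2*n+1) :
    ∏ m ∈ range n, (qq^p - qq^(2*m+2)) = (-1)^n * (qq^(n*n+n) * PO n) := by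
  have h1 := Finset.prod_range_reflect (fun m => qq^p - qq^(2*m+2)) n
  rw [← h1]
  have h2 : ∀ j ∈ range n, qq^p - qq^(2*(n-1-j)+2) = qq^(2*n-2*j) * (-(1 - qq^(2*j+1))) := by
    intro j hj
    have hj' : j < n := Finset.mem_range.mp hj
    rw [show 2*(n-1-j)+2 = 2*n-2*j by omega]
    have e3 : qq^(2*n-2*j) * qq^(2*j+1) = qq^p := by
      rw [← pow_add, show 2*n-2*j+(2*j+1) = p by omega]
    linear_combination -e3
  rw [Finset.prod_congr rfl h2, Finset.prod_mul_distrib, Finset.prod_pow_eq_pow_sum]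
  have hsum : ∑ j ∈ range n, (2*n-2*j) = n*n+n := by
    have h4 := Finset.sum_range_reflect (fun j => 2*n-2*j) n
    have h5 : ∀ j ∈ range n, 2*n-2*(n-1-j) = 2*j+2 := fun j hj => by
      have := Finset.mem_range.mp hj; omega
    rw [← h4, Finset.sum_congr rfl h5, sum_aux]
  rw [hsum]
  have hneg : ∀ j ∈ range n, (-(1 - qq^(2*j+1))) = (-1) * (1 - qq^(2*j+1)) := fun j _ => by ring
  rw [Finset.prod_congr rfl hneg, Finset.prod_mul_distrib, Finset.prod_const, Finset.card_range]
  rw [PO]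
  ring

lemma good_inv_sum {p : ℕ} (hp : p.Prime) (hodd : Odd p) {N : ℕ} (hN : N ≤ p-1) :
    Good p (∑ m ∈ range N, ((1:RatFunc ℚ) - qq^(2*m+2))⁻¹) := by
  have hodd' : p % 2 = 1 := Nat.odd_iff.mp hodd
  have hp2 : 2 ≤ p := hp.two_le
  refine good_sum _ _ fun m hm => ?_
  have hm' : m < N := Finset.mem_range.mp hm
  have h : ((1:RatFunc ℚ) - qq^(2*m+2)) = am (1 - X^(2*m+2)) := by
    rw [map_sub, map_one, am_pow_X]
  rw [h]
  exact good_inv hp (coprime_one_sub_pow hp (not_dvd_small hp (by omega) (by omega) (by omega)))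

lemma expand {p : ℕ} (hp : p.Prime) (hodd : Odd p) :
    ∀ N, N ≤ p-1 → ∃ J : RatFunc ℚ, Good p J ∧
      ∏ m ∈ range N, (qq^p - qq^(2*m+2)) =
        PE N * (1 + (qq^p - 1) * ∑ m ∈ range N, (1 - qq^(2*m+2))⁻¹) + (qq^p-1)^2 * J := by
  intro N
  induction N with
  | zero =>
    intro _
    refine ⟨0, by simpa using good_am p 0, ?_⟩
    simp [PE]
  | succ M ih =>
    intro hM
    obtain ⟨J, hJ, hEq⟩ := ih (by omega)
    have hB : ((1:RatFunc ℚ) - qq^(2*M+2)) ≠ 0 := one_sub_qq_pow_ne (by omega)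
    refine ⟨PE M * (∑ m ∈ range M, (1 - qq^(2*m+2))⁻¹) + J * (qq^p - qq^(2*M+2)), ?_, ?_⟩
    · refine Good.add ?_ ?_
      · refine Good.mul ?_ (good_inv_sum hp hodd (by omega))
        rw [← am_PEp]; exact good_am p _
      · exact hJ.mul ((good_qq_pow p p).sub (good_qq_pow p _))
    · rw [Finset.prod_range_succ, hEq, PE_succ, Finset.sum_range_succ]
      field_simp
      ring

lemma eval_cong {p n : ℕ} (hp : p.Prime) (hodd : Odd p) (hpn : p = 2*n+1) :
    CongrModPow (Ssum n n) ((-1)^n * (qq^(n*n+n))⁻¹) p 2 := by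
  have hodd' : p % 2 = 1 := Nat.odd_iff.mp hodd
  have hsplit : Ssum n n = (∑ j ∈ range n, cc (j+1) * cc (n+j+1)) + cc n := by
    rw [Ssum, Finset.sum_range_succ']
    congr 1
    · exact Finset.sum_congr rfl fun j _ => by rw [show j+1+n = n+j+1 by omega]
    · rw [show (0:ℕ)+n = n by omega, cc_zero, one_mul]
  have h1 : CongrModPow (Ssum n n)
      ((∑ j ∈ range n, -((qq^p - 1) * cc n * (1 - qq^(2*j+2))⁻¹)) + cc n) p 2 := by
    rw [hsplit]
    exact cong_add (cong_sum fun j hj => eval_term hp hodd hpn hj) (cong_refl p 2 _)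
  set Sa := ∑ m ∈ range n, ((1:RatFunc ℚ) - qq^(2*m+2))⁻¹ with hSa
  have hsum_eq : (∑ j ∈ range n, -((qq^p - 1) * cc n * (1 - qq^(2*j+2))⁻¹)) + cc n
      = cc n * (1 - (qq^p - 1) * Sa) := by
    have hc : ∀ j ∈ range n, -((qq^p - 1) * cc n * (1 - qq^(2*j+2))⁻¹)
        = (-((qq^p - 1) * cc n)) * (1 - qq^(2*j+2))⁻¹ := fun j _ => by ring
    rw [Finset.sum_congr rfl hc, ← Finset.mul_sum, hSa]
    ring
  rw [hsum_eq] at h1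
  refine cong_trans h1 ?_
  obtain ⟨J, hJ, hEx⟩ := expand hp hodd n (by omega)
  have hA := lemA hpn
  have hε : qq^p - 1 = am (Phi p) * am (X - 1) := by
    rw [← map_mul, phi_mul, map_sub, map_one, am_pow_X]
  have hε' : qq^p = am (Phi p) * am (X - 1) + 1 := by linear_combination hε
  have hqm : (qq : RatFunc ℚ)^(n*n+n) ≠ 0 := pow_ne_zero _ (by rw [qq]; exact RatFunc.X_ne_zero)
  have hPE : PE n ≠ 0 := PE_ne_zero n
  have hSaGood : Good p Sa := good_inv_sum hp hodd (by omega)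
  have hGoodH : Good p (J * (1 - (qq^p - 1)*Sa) - PE n * Sa^2) := by
    refine Good.sub (hJ.mul ((good_one p).sub (Good.mul ?_ hSaGood))) ?_
    · exact (good_qq_pow p p).sub (good_one p)
    · refine Good.mul (by rw [← am_PEp]; exact good_am p _) ?_
      rw [sq]
      exact hSaGood.mul hSaGood
  have hGoodInv : Good p ((PE n * qq^(n*n+n))⁻¹) := by
    have he : PE n * qq^(n*n+n) = am (PEp n * X^(n*n+n)) := by
      rw [map_mul, am_PEp, am_pow_X]
    rw [he]
    exact good_inv hp ((coprime_PEp hp hodd (by omega)).mul_left (coprime_qq_pow hp _))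
  rcases Nat.even_or_odd n with hpar | hpar
  · have hsgn : ((-1 : RatFunc ℚ))^n = 1 := Even.neg_one_pow hpar
    rw [hsgn] at hA ⊢
    have hPOe : PO n = (PE n * (1 + (qq^p-1)*Sa) + (qq^p-1)^2*J) / qq^(n*n+n) := by
      rw [eq_div_iff hqm]
      linear_combination hEx - hA
    refine cong_of_sub_eq (h := am ((X-1)^2) *
      ((J * (1 - (qq^p-1)*Sa) - PE n * Sa^2) * (PE n * qq^(n*n+n))⁻¹)) ?_ ?_
    · exact (good_am p _).mul (hGoodH.mul hGoodInv)
    · rw [cc, hPOe, map_pow, map_pow, hε']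
      field_simp
      ring
  · have hsgn : ((-1 : RatFunc ℚ))^n = -1 := Odd.neg_one_pow hpar
    rw [hsgn] at hA ⊢
    have hPOe : PO n = -((PE n * (1 + (qq^p-1)*Sa) + (qq^p-1)^2*J) / qq^(n*n+n)) := by
      rw [← neg_div, eq_div_iff hqm]
      linear_combination hA - hEx
    refine cong_of_sub_eq (h := am ((X-1)^2) *
      (-((J * (1 - (qq^p-1)*Sa) - PE n * Sa^2) * (PE n * qq^(n*n+n))⁻¹))) ?_ ?_
    · exact (good_am p _).mul (hGoodH.mul hGoodInv).neg
    · rw [cc, hPOe, map_pow, map_pow, hε']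
      field_simp
      ring

end Stmt16

theorem stmt_16 (p : ℕ) (hp : p.Prime) (hodd : Odd p) (s : ℕ) (hs : s ≤ (p - 1) / 2) :
    CongrModPow
      (∑ k ∈ Finset.range ((p - 1) / 2 + 1),
        qP qq (qq ^ 2) k * qP qq (qq ^ 2) (k + s) /
          (qP (qq ^ 2) (qq ^ 2) k * qP (qq ^ 2) (qq ^ 2) (k + s)))
      ((-1) ^ ((p - 1) / 2) * qq ^ ((1 - (p : ℤ) ^ 2) / 4)) p 2 := by
  have hodd' : p % 2 = 1 := Nat.odd_iff.mp hodd
  have hp2 : 2 ≤ p := hp.two_le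
  set n := (p - 1) / 2 with hn
  have hpn : p = 2*n+1 := by omega
  have hSs : (∑ k ∈ Finset.range (n + 1),
      qP qq (qq ^ 2) k * qP qq (qq ^ 2) (k + s) /
        (qP (qq ^ 2) (qq ^ 2) k * qP (qq ^ 2) (qq ^ 2) (k + s))) = Stmt16.Ssum n s := by
    refine Finset.sum_congr rfl fun k _ => ?_
    rw [Stmt16.qP_PO, Stmt16.qP_PO, Stmt16.qP_PE, Stmt16.qP_PE]
    simp only [Stmt16.cc]
    rw [div_mul_div_comm]
  rw [hSs]
  have hT : (qq : RatFunc ℚ) ^ ((1 - (p : ℤ) ^ 2) / 4) = (qq ^ (n*n+n))⁻¹ := by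
    have h4 : (1 - (p:ℤ)^2) = 4 * (-((n*n+n : ℕ) : ℤ)) := by
      rw [hpn]; push_cast; ring
    have he : (1 - (p : ℤ)^2)/4 = -((n*n+n : ℕ) : ℤ) := by
      rw [h4, Int.mul_ediv_cancel_left _ (by norm_num)]
    rw [he, zpow_neg, zpow_natCast]
  rw [hT]
  exact Stmt16.cong_trans (Stmt16.chain_cong hp hodd hpn (n - s) s (by omega))
    (Stmt16.eval_cong hp hodd hpn)
end

section
/- Let p be an odd prime and m, r positive integers with p not dividing m and r < m. Let ⟨a⟩_p denote the least nonnegative residue. For any integer s with 0 ≤ s ≤ ⟨-(m-r)/m⟩_p (where -(m-r)/m is interpreted as the p-adic rational -(m-r)·m^{-1} mod p), the sum Σ_{k=0}^{p-s-1} (q^r;q^m)_k (q^{m-r};q^m)_{k+s} / ((q^m;q^m)_k (q^m;q^m)_{k+s}) is congruent to (-1)^{⟨-r/m⟩_p} · q^{-m·⟨-r/m⟩_p·(⟨-r/m⟩_p + 1)/2} modulo 1+q+...+q^{p-1}. -/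
open Finset Polynomial

namespace Aux

def Tri (n : ℕ) : ℕ := ∑ i ∈ Finset.range n, i

lemma Tri_succ (n : ℕ) : Tri (n+1) = Tri n + n := Finset.sum_range_succ _ _

lemma Tri_two (n : ℕ) : 2 * Tri n + n = n * n := by
  induction n with
  | zero => simp [Tri]
  | succ k ih =>
      have h : (k+1)*(k+1) = k*k + 2*k+1 := by ring
      rw [Tri_succ]
      linarith [ih, h]

lemma Tri_add (a b : ℕ) : Tri (a+b) = Tri a + Tri b + a*b := by
  unfold Tri
  rw [Finset.sum_range_add]
  have : ∑ i ∈ Finset.range b, (a + i) = a * b + ∑ i ∈ Finset.range b, i := by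
    rw [Finset.sum_add_distrib, Finset.sum_const, smul_eq_mul, Finset.card_range, Nat.mul_comm]
  rw [this]; ring

variable {K : Type*} [Field K]

lemma qP_zero (a q : K) : qP a q 0 = 1 := by simp [qP]

lemma qP_ne_zero {q : K} {k n : ℕ} (hkn : k ≤ n) (hq : ∀ j, 0 < j → j ≤ n → q^j ≠ 1) :
    qP q q k ≠ 0 := by
  unfold qP
  apply Finset.prod_ne_zero_iff.mpr
  intro i hi
  rw [Finset.mem_range] at hi
  have : q * q ^ i = q ^ (i+1) := by rw [pow_succ']
  rw [this]
  intro h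
  exact hq (i+1) (by omega) (by omega) (sub_eq_zero.mp h).symm

lemma qBin_eq (q : K) {n k : ℕ} (h : k ≤ n) :
    qBin q n k = qP (q ^ (n - k + 1)) q k / qP q q k := if_pos h

lemma qBin_zero_of_lt (q : K) {n k : ℕ} (h : n < k) : qBin q n k = 0 := if_neg (by omega)

lemma qBin_zero (q : K) (n : ℕ) : qBin q n 0 = 1 := by
  rw [qBin_eq q (Nat.zero_le n), qP_zero, qP_zero, div_one]

lemma qBin_self (q : K) {n : ℕ} (hq : ∀ j, 0 < j → j ≤ n → q^j ≠ 1) : qBin q n n = 1 := by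
  rw [qBin_eq q (le_refl n)]
  have : n - n + 1 = 1 := by omega
  rw [this, pow_one, div_self (qP_ne_zero (le_refl n) hq)]


lemma pascal (q : K) (n k : ℕ) (hq : ∀ j, 0 < j → j ≤ k+1 → q^j ≠ 1) :
    qBin q (n+1) (k+1) = qBin q n (k+1) + q^(n-k) * qBin q n k := by
  rcases lt_trichotomy k n with hkn | rfl | hkn
  · -- main case k+1 ≤ n
    have hkn' : k + 1 ≤ n := hkn
    have hDk : qP q q k ≠ 0 := qP_ne_zero (Nat.le_succ k) hq
    have hq1 : (1 : K) - q^(k+1) ≠ 0 :=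
      sub_ne_zero.mpr (Ne.symm (hq (k+1) (by omega) (by omega)))
    rw [qBin_eq q (show k+1 ≤ n+1 by omega), qBin_eq q hkn', qBin_eq q (show k ≤ n by omega)]
    have e1 : n+1-(k+1)+1 = n-k+1 := by omega
    have e2 : n-(k+1)+1 = n-k := by omega
    rw [e1, e2]
    have hpow : q^(n-k) * q^(k+1) = q^(n+1) := by rw [← pow_add]; congr 1; omega
    have num1 : qP (q^(n-k+1)) q (k+1) = qP (q^(n-k+1)) q k * (1 - q^(n+1)) := by
      have h2 : q^(n-k+1) * q^k = q^(n+1) := by rw [← pow_add]; congr 1; omega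
      rw [qP, Finset.prod_range_succ, h2]; rfl
    have num2 : qP (q^(n-k)) q (k+1) = (1 - q^(n-k)) * qP (q^(n-k+1)) q k := by
      rw [qP, Finset.prod_range_succ', pow_zero, mul_one, mul_comm]
      congr 1
      apply Finset.prod_congr rfl
      intro i _
      congr 1
      rw [← pow_add, ← pow_add]
      congr 1
      omega
    have den : qP q q (k+1) = qP q q k * (1 - q^(k+1)) := by
      rw [qP, Finset.prod_range_succ, ← pow_succ']; rfl
    rw [num1, num2, den]
    rw [show (1 - q^(n-k)) * qP (q^(n-k+1)) q k / (qP q q k * (1 - q^(k+1)))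
          + q^(n-k) * (qP (q^(n-k+1)) q k / qP q q k)
        = ((1 - q^(n-k)) * qP (q^(n-k+1)) q k
            + q^(n-k) * (qP (q^(n-k+1)) q k * (1 - q^(k+1)))) / (qP q q k * (1 - q^(k+1)))
        from by
          rw [add_div]
          congr 1
          rw [mul_div_assoc]
          congr 1
          rw [mul_comm (qP q q k) (1 - q^(k+1)), mul_comm (qP (q^(n-k+1)) q k) (1 - q^(k+1)),
            mul_div_mul_left _ _ hq1]]
    congr 1
    linear_combination (qP (q^(n-k+1)) q k) * hpow
  · -- k = n
    rw [show k - k = 0 from by omega, pow_zero,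
      qBin_zero_of_lt q (Nat.lt_succ_self k),
      @qBin_self K _ q (k+1) (fun j h1 h2 => hq j h1 (by omega)),
      @qBin_self K _ q k (fun j h1 h2 => hq j h1 (by omega))]
    ring
  · -- k > n
    rw [qBin_zero_of_lt q (by omega), qBin_zero_of_lt q (by omega),
      qBin_zero_of_lt q (by omega)]
    ring

lemma qP_split (q : K) {n k : ℕ} (h : k ≤ n) :
    qP q q (n-k) * qP (q^(n-k+1)) q k = qP q q n := by
  conv_rhs => rw [qP, show n = (n-k)+k from by omega, Finset.prod_range_add]
  congr 1
  apply Finset.prod_congr rfl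
  intro i _
  congr 1
  rw [← pow_add, ← pow_succ']
  congr 1
  omega

lemma qBin_symm (q : K) {n k : ℕ} (h : k ≤ n) (hq : ∀ j, 0 < j → j ≤ n → q^j ≠ 1) :
    qBin q n k = qBin q n (n-k) := by
  have hk : qP q q k ≠ 0 := qP_ne_zero h hq
  have hnk : qP q q (n-k) ≠ 0 := qP_ne_zero (by omega) hq
  rw [qBin_eq q h, qBin_eq q (show n-k ≤ n by omega)]
  have h1 := qP_split q h
  have h2 := qP_split q (show n-k ≤ n from by omega)
  rw [show n-(n-k) = k from by omega] at h2
  rw [show n-(n-k) = k from by omega]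
  rw [div_eq_div_iff hk hnk]
  linear_combination h1 - h2

lemma vandermonde (q : K) (b : ℕ) : ∀ a h : ℕ, (∀ j, 0 < j → j ≤ h → q^j ≠ 1) →
    ∑ k ∈ Finset.range (h+1), qBin q a k * qBin q b (h-k) * q^((a-k)*(h-k))
      = qBin q (a+b) h := by
  induction b with
  | zero =>
    intro a h hq
    rw [Finset.sum_range_succ]
    have hz : ∀ k ∈ Finset.range h, qBin q a k * qBin q 0 (h-k) * q^((a-k)*(h-k)) = 0 := by
      intro k hk; rw [Finset.mem_range] at hk
      rw [qBin_zero_of_lt q (show (0:ℕ) < h-k from by omega)]; ring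
    rw [Finset.sum_eq_zero hz, zero_add, Nat.sub_self, mul_zero, pow_zero, qBin_zero,
      mul_one, mul_one, Nat.add_zero]
  | succ b ih =>
    intro a h hq
    rcases Nat.eq_zero_or_pos h with rfl | hh
    · simp [qBin_zero]
    by_cases hbig : a + b + 1 < h
    · rw [qBin_zero_of_lt q (by omega)]
      apply Finset.sum_eq_zero
      intro k hk; rw [Finset.mem_range] at hk
      by_cases hka : k ≤ a
      · rw [qBin_zero_of_lt q (show b+1 < h-k from by omega)]; ring
      · rw [qBin_zero_of_lt q (show a < k from by omega)]; ring
    · have hh1 : h ≤ a + b + 1 := by omega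
      rw [Finset.sum_range_succ]
      have hstep : ∀ k ∈ Finset.range h, qBin q a k * qBin q (b+1) (h-k) * q^((a-k)*(h-k))
          = qBin q a k * qBin q b (h-k) * q^((a-k)*(h-k))
            + q^(a+b+1-h) * (qBin q a k * qBin q b (h-1-k) * q^((a-k)*(h-1-k))) := by
        intro k hk; rw [Finset.mem_range] at hk
        have hhk : h - k = (h-1-k)+1 := by omega
        rw [hhk, pascal q b (h-1-k) (fun j h1 h2 => hq j h1 (by omega))]
        by_cases hka : k ≤ a
        · by_cases hkb : h-1-k ≤ b
          · have hkey : q^(b-(h-1-k)) * q^((a-k)*(h-1-k+1))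
                = q^(a+b+1-h) * q^((a-k)*(h-1-k)) := by
              rw [← pow_add, ← pow_add]
              congr 1
              rw [Nat.mul_succ]
              generalize (a-k)*(h-1-k) = X
              omega
            linear_combination (qBin q a k * qBin q b (h-1-k)) * hkey
          · rw [qBin_zero_of_lt q (show b < h-1-k by omega)]; ring
        · rw [qBin_zero_of_lt q (show a < k by omega)]; ring
      rw [Finset.sum_congr rfl hstep, Finset.sum_add_distrib, ← Finset.mul_sum]
      have hV2 : ∑ k ∈ Finset.range h, qBin q a k * qBin q b (h-1-k) * q^((a-k)*(h-1-k))
          = qBin q (a+b) (h-1) := by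
        have h3 := ih a (h-1) (fun j h1 h2 => hq j h1 (by omega))
        rw [show h-1+1 = h from by omega] at h3
        exact h3
      rw [hV2]
      have hre : (∑ k ∈ Finset.range h, qBin q a k * qBin q b (h-k) * q^((a-k)*(h-k)))
          + qBin q a h * qBin q (b+1) (h-h) * q^((a-h)*(h-h)) = qBin q (a+b) h := by
        rw [← ih a h hq, Finset.sum_range_succ]
        rw [Nat.sub_self, mul_zero, pow_zero, qBin_zero, qBin_zero]
      have hP := pascal q (a+b) (h-1) (fun j h1 h2 => hq j h1 (by omega))
      rw [show h-1+1 = h from by omega] at hP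
      rw [show (a+b)-(h-1) = a+b+1-h from by omega] at hP
      rw [show a+(b+1) = a+b+1 from by omega, hP, ← hre]
      ring

lemma qP_flip {p : ℕ} {ω : K} (hωp : ω^p = 1) {u k : ℕ} (hku : k ≤ u) (hup : u < p) :
    qP (ω^(p-u)) ω k = (-1)^k * ω^(k*(p-u) + Tri k) * qP (ω^(u-k+1)) ω k := by
  unfold qP
  have hfac : ∀ i ∈ Finset.range k, 1 - ω^(p-u) * ω^i
      = (-1 * ω^(p-u+i)) * (1 - ω^(u-i)) := by
    intro i hi; rw [Finset.mem_range] at hi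
    have hx : ω^(p-u+i) * ω^(u-i) = 1 := by
      rw [← pow_add, show p-u+i+(u-i) = p from by omega, hωp]
    have hy : ω^(p-u) * ω^i = ω^(p-u+i) := by rw [← pow_add]
    rw [hy]
    linear_combination -hx
  rw [Finset.prod_congr rfl hfac, Finset.prod_mul_distrib, Finset.prod_mul_distrib]
  have h1 : (∏ _i ∈ Finset.range k, (-1 : K)) = (-1)^k := by
    rw [Finset.prod_const, Finset.card_range]
  have h2 : (∏ i ∈ Finset.range k, ω^(p-u+i)) = ω^(k*(p-u) + Tri k) := by
    rw [Finset.prod_pow_eq_pow_sum]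
    congr 1
    rw [Finset.sum_add_distrib, Finset.sum_const, Finset.card_range, smul_eq_mul]
    rfl
  have h3 : (∏ i ∈ Finset.range k, (1 - ω^(u-i))) = qP (ω^(u-k+1)) ω k := by
    rw [qP, ← Finset.prod_range_reflect]
    apply Finset.prod_congr rfl
    intro i hi; rw [Finset.mem_range] at hi
    congr 1
    rw [← pow_add]
    congr 1
    omega
  rw [h1, h2, h3]
  rfl

lemma flip_div {p : ℕ} {ω : K} (hωp : ω^p = 1) (hq : ∀ j, 0 < j → j ≤ p-1 → ω^j ≠ 1)
    {u : ℕ} (hup : u < p) (k : ℕ) :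
    qP (ω^(p-u)) ω k / qP ω ω k = (-1)^k * ω^(k*(p-u) + Tri k) * qBin ω u k := by
  by_cases hku : k ≤ u
  · rw [qP_flip hωp hku hup, qBin_eq ω hku, mul_div_assoc]
  · rw [qBin_zero_of_lt ω (by omega), mul_zero]
    have hz : qP (ω^(p-u)) ω k = 0 := by
      unfold qP
      apply Finset.prod_eq_zero (Finset.mem_range.mpr (show u < k by omega))
      rw [← pow_add, show p-u+u = p from by omega, hωp]
      ring
    rw [hz, zero_div]

lemma qBin_top {p : ℕ} {ω : K} (hωp : ω^p = 1) (hq : ∀ j, 0 < j → j ≤ p-1 → ω^j ≠ 1)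
    {h : ℕ} (hh : h ≤ p-1) (hp : 0 < p) :
    qBin ω (p-1) h = (-1)^h * ω^(h*(p-h) + Tri h) := by
  have hfd := flip_div hωp hq (show h < p from by omega) h
  rw [qBin_self ω (fun j a b => hq j a (by omega)), mul_one] at hfd
  rw [qBin_eq ω hh, show p-1-h+1 = p-h from by omega, hfd]

lemma NExp {p t t' : ℕ} (htt' : t+t'+1 = p) (k s : ℕ) :
    k*(p-t) + Tri k + ((k+s)*(p-t') + Tri (k+s))
      = k*p + (k*(k+s) + (Tri s + s*(p-t'))) := by
  have h2 := Tri_add k s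
  rw [h2]
  have h1 : 2*(Tri k : ℤ) + k = k*k := by exact_mod_cast Tri_two k
  zify [show t ≤ p from by omega, show t' ≤ p from by omega]
  have hp2 : (p:ℤ) = t + t' + 1 := by exact_mod_cast htt'.symm
  rw [hp2]
  linear_combination h1

lemma FinExp {p t t' s : ℕ} (htt' : t+t'+1 = p) (hs : s ≤ t') :
    (Tri s + s*(p-t')) + ((t+s)*(p-(t+s)) + Tri (t+s)) + Tri (t+1) = (t+s)*p := by
  rw [Tri_add t s, Tri_succ t]
  have h1 : 2*(Tri s : ℤ) + s = s*s := by exact_mod_cast Tri_two s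
  have h2 : 2*(Tri t : ℤ) + t = t*t := by exact_mod_cast Tri_two t
  zify [show t' ≤ p from by omega, show t+s ≤ p from by omega]
  have hp2 : (p:ℤ) = t + t' + 1 := by exact_mod_cast htt'.symm
  rw [hp2]
  linear_combination h1 + h2

lemma main_sum {p : ℕ} {ω : K} (hp : 1 < p) (hω : IsPrimitiveRoot ω p)
    {t t' s : ℕ} (htt' : t + t' + 1 = p) (hs : s ≤ t') :
    ∑ k ∈ Finset.range (p - s), qP (ω^(p-t)) ω k * qP (ω^(p-t')) ω (k+s) /
        (qP ω ω k * qP ω ω (k+s))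
      = (-1)^t * (ω ^ Tri (t+1))⁻¹ := by
  have hω0 : ω ≠ 0 := hω.ne_zero (by omega)
  have hωp : ω^p = 1 := hω.pow_eq_one
  have hq : ∀ j, 0 < j → j ≤ p-1 → ω^j ≠ 1 := by
    intro j h1 h2 hone
    have hd := (hω.pow_eq_one_iff_dvd j).mp hone
    have := Nat.le_of_dvd h1 hd
    omega
  have ht : t < p := by omega
  have ht' : t' < p := by omega
  have hterm : ∀ k ∈ Finset.range (p-s),
      qP (ω^(p-t)) ω k * qP (ω^(p-t')) ω (k+s) / (qP ω ω k * qP ω ω (k+s))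
      = ((-1)^s * ω^(Tri s + s*(p-t'))) *
          (ω^(k*(k+s)) * (qBin ω t k * qBin ω t' (k+s))) := by
    intro k hk; rw [Finset.mem_range] at hk
    rw [← div_mul_div_comm]
    rw [flip_div hωp hq ht k, flip_div hωp hq ht' (k+s)]
    have hsgn : ((-1:K))^k * (-1)^(k+s) = (-1)^s := by
      rw [← pow_add, show k+(k+s) = 2*k+s from by omega, pow_add, pow_mul, neg_one_sq,
        one_pow, one_mul]
    have hpow : ω^(k*(p-t)+Tri k) * ω^((k+s)*(p-t')+Tri (k+s))
        = ω^(Tri s + s*(p-t')) * ω^(k*(k+s)) := by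
      rw [← pow_add, NExp htt' k s, pow_add, pow_add, show k*p = p*k from by ring,
        pow_mul, hωp, one_pow, one_mul]
      ring
    calc (-1)^k * ω^(k*(p-t)+Tri k) * qBin ω t k
          * ((-1)^(k+s) * ω^((k+s)*(p-t')+Tri (k+s)) * qBin ω t' (k+s))
        = ((-1:K)^k * (-1)^(k+s)) * ((ω^(k*(p-t)+Tri k) * ω^((k+s)*(p-t')+Tri (k+s)))
            * (qBin ω t k * qBin ω t' (k+s))) := by ring
      _ = ((-1)^s * ω^(Tri s + s*(p-t'))) *
          (ω^(k*(k+s)) * (qBin ω t k * qBin ω t' (k+s))) := by rw [hsgn, hpow]; ring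
  rw [Finset.sum_congr rfl hterm, ← Finset.mul_sum]
  have hB : ∑ k ∈ Finset.range (t+1), (fun k => ω^(k*(k+s)) * (qBin ω t k * qBin ω t' (k+s))) k
      = ∑ k ∈ Finset.range (p-s), (fun k => ω^(k*(k+s)) * (qBin ω t k * qBin ω t' (k+s))) k := by
    apply Finset.sum_subset (Finset.range_subset_range.mpr (show t+1 ≤ p-s from by omega))
    intro x hx hnx
    simp only [Finset.mem_range] at hx hnx
    rw [qBin_zero_of_lt ω (show t < x from by omega)]
    ring
  rw [← hB]
  have hvan : ∀ i ∈ Finset.range (t+s+1), i ∉ Finset.range (t+1) →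
      qBin ω t i * qBin ω t' (t+s-i) * ω^((t-i)*(t+s-i)) = 0 := by
    intro i hi hni
    simp only [Finset.mem_range] at hi hni
    rw [qBin_zero_of_lt ω (show t < i from by omega)]
    ring
  have hC : ∑ i ∈ Finset.range (t+s+1), qBin ω t i * qBin ω t' (t+s-i) * ω^((t-i)*(t+s-i))
      = ∑ k ∈ Finset.range (t+1), ω^(k*(k+s)) * (qBin ω t k * qBin ω t' (k+s)) := by
    rw [← Finset.sum_subset (Finset.range_subset_range.mpr (show t+1 ≤ t+s+1 from by omega)) hvan]
    have hrefl := Finset.sum_range_reflect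
      (fun i => qBin ω t i * qBin ω t' (t+s-i) * ω^((t-i)*(t+s-i))) (t+1)
    rw [← hrefl]
    apply Finset.sum_congr rfl
    intro k hk; rw [Finset.mem_range] at hk
    simp only [Nat.add_sub_cancel]
    rw [show t+s-(t-k) = k+s from by omega,
      show t-(t-k) = k from by omega,
      ← qBin_symm ω (show k ≤ t from by omega) (fun j a b => hq j a (by omega))]
    ring
  have hV := vandermonde ω t' t (t+s) (fun j a b => hq j a (by omega))
  rw [hC] at hV
  rw [hV, show t+t' = p-1 from by omega,
    qBin_top hωp hq (show t+s ≤ p-1 from by omega) (by omega)]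
  have hsgn2 : ((-1:K))^s * (-1)^(t+s) = (-1)^t := by
    rw [← pow_add, show s+(t+s) = 2*s+t from by omega, pow_add, pow_mul, neg_one_sq,
      one_pow, one_mul]
  have hpow2 : ω^(Tri s + s*(p-t')) * ω^((t+s)*(p-(t+s)) + Tri (t+s)) = (ω^(Tri (t+1)))⁻¹ := by
    apply eq_inv_of_mul_eq_one_left
    rw [← pow_add, ← pow_add, FinExp htt' hs, show (t+s)*p = p*(t+s) from by ring,
      pow_mul, hωp, one_pow]
  calc ((-1)^s * ω^(Tri s + s*(p-t'))) * ((-1)^(t+s) * ω^((t+s)*(p-(t+s)) + Tri (t+s)))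
      = ((-1:K)^s * (-1)^(t+s)) * (ω^(Tri s + s*(p-t')) * ω^((t+s)*(p-(t+s)) + Tri (t+s))) := by
        ring
    _ = (-1)^t * (ω^(Tri (t+1)))⁻¹ := by rw [hsgn2, hpow2]


end Aux
namespace Aux

noncomputable def qPP (a b : Polynomial ℚ) (n : ℕ) : Polynomial ℚ :=
  ∏ i ∈ Finset.range n, (1 - a * b ^ i)

lemma map_qPP {F : Type*} [Field F] (φ : Polynomial ℚ →+* F) (a b : Polynomial ℚ) (n : ℕ) :
    φ (qPP a b n) = qP (φ a) (φ b) n := by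
  unfold qPP qP
  rw [map_prod]
  apply Finset.prod_congr rfl
  intro i _
  rw [map_sub, map_one, map_mul, map_pow]

lemma aeval_qPP {F : Type*} [Field F] [Algebra ℚ F] (x : F) (a b : Polynomial ℚ) (n : ℕ) :
    Polynomial.aeval x (qPP a b n) = qP (Polynomial.aeval x a) (Polynomial.aeval x b) n := by
  unfold qPP qP
  rw [map_prod]
  apply Finset.prod_congr rfl
  intro i _
  rw [map_sub, map_one, map_mul, map_pow]

lemma sum_div_mul_prod {F : Type*} [Field F] (n : ℕ) (g d : ℕ → F)
    (hd : ∀ k ∈ Finset.range n, d k ≠ 0) :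
    (∑ k ∈ Finset.range n, g k / d k) * ∏ k ∈ Finset.range n, d k
      = ∑ k ∈ Finset.range n, g k * ∏ j ∈ (Finset.range n).erase k, d j := by
  rw [Finset.sum_mul]
  apply Finset.sum_congr rfl
  intro k hk
  rw [← Finset.mul_prod_erase (Finset.range n) d hk]
  field_simp [hd k hk]

end Aux

open Aux in
theorem stmt_17 (p m r : ℕ) (hp : p.Prime) (hodd : Odd p) (hpm : ¬ p ∣ m)
    (hr : 0 < r) (hrm : r < m) (t t' s : ℕ)
    (ht : t < p) (htdef : (m * t + r) % p = 0)
    (ht' : t' < p) (ht'def : (m * t' + (m - r)) % p = 0)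
    (hs : s ≤ t') :
    CongrModPow
      (∑ k ∈ Finset.range (p - s),
        qP (qq ^ r) (qq ^ m) k * qP (qq ^ (m - r)) (qq ^ m) (k + s) /
          (qP (qq ^ m) (qq ^ m) k * qP (qq ^ m) (qq ^ m) (k + s)))
      ((-1) ^ t * qq ^ (-((m : ℤ) * t * (t + 1) / 2))) p 1 := by
  classical
  haveI : Fact p.Prime := ⟨hp⟩
  have hp1 : 1 < p := hp.one_lt
  have hd1 : p ∣ m * t + r := Nat.dvd_of_mod_eq_zero htdef
  have hd2 : p ∣ m * t' + (m - r) := Nat.dvd_of_mod_eq_zero ht'def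
  have htt' : t + t' + 1 = p := by
    have hmul : m * (t + t' + 1) = (m*t + r) + (m*t' + (m - r)) := by
      have h0 : m * (t+t'+1) = m*t + m*t' + m := by ring
      omega
    have h3 : p ∣ m * (t+t'+1) := by rw [hmul]; exact Nat.dvd_add hd1 hd2
    have hcop : Nat.Coprime p m := hp.coprime_iff_not_dvd.mpr hpm
    have h4 : p ∣ t+t'+1 := hcop.dvd_of_dvd_mul_left h3
    obtain ⟨c, hc⟩ := h4
    rcases c with _ | _ | c
    · omega
    · omega
    · exfalso
      have h5 : p * 2 ≤ p * (c + 2) := Nat.mul_le_mul_left _ (by omega)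
      rw [← hc] at h5
      omega
  -- the cyclotomic field and primitive root
  haveI : NeZero p := ⟨hp.ne_zero⟩
  haveI : NeZero (p:ℚ) := ⟨by exact_mod_cast hp.ne_zero⟩
  set K := CyclotomicField p ℚ with hK
  haveI : IsCyclotomicExtension {p} ℚ K := CyclotomicField.isCyclotomicExtension p ℚ
  set ζ : K := IsCyclotomicExtension.zeta p ℚ K with hζdef
  have hζ : IsPrimitiveRoot ζ p := IsCyclotomicExtension.zeta_spec p ℚ K
  have hζ0 : ζ ≠ 0 := hζ.ne_zero (by omega)
  have hcopm : Nat.Coprime m p := Nat.coprime_comm.mp (hp.coprime_iff_not_dvd.mpr hpm)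
  have hω : IsPrimitiveRoot (ζ^m) p := hζ.pow_of_coprime m hcopm
  have hω0 : (ζ:K)^m ≠ 0 := pow_ne_zero _ hζ0
  have hq : ∀ j, 0 < j → j ≤ p-1 → (ζ^m)^j ≠ 1 := by
    intro j h1 h2 hone
    have hd := (hω.pow_eq_one_iff_dvd j).mp hone
    have := Nat.le_of_dvd h1 hd
    omega
  -- power identities
  have hζr : ζ^r = (ζ^m)^(p-t) := by
    have h3 : ζ^(m*t) ≠ 0 := pow_ne_zero _ hζ0
    apply mul_right_cancel₀ h3
    have h1 : ζ^r * ζ^(m*t) = 1 := by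
      rw [← pow_add, show r + m*t = m*t + r from by ring]
      exact (hζ.pow_eq_one_iff_dvd _).mpr hd1
    have h2 : (ζ^m)^(p-t) * ζ^(m*t) = 1 := by
      rw [← pow_mul, ← pow_add, show m*(p-t) + m*t = p*m from by
        rw [← Nat.mul_add]; rw [show p-t+t = p from by omega]; ring]
      rw [pow_mul, hζ.pow_eq_one, one_pow]
    rw [h1, h2]
  have hζmr : ζ^(m-r) = (ζ^m)^(p-t') := by
    have h3 : ζ^(m*t') ≠ 0 := pow_ne_zero _ hζ0
    apply mul_right_cancel₀ h3
    have h1 : ζ^(m-r) * ζ^(m*t') = 1 := by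
      rw [← pow_add, show (m-r) + m*t' = m*t' + (m-r) from by ring]
      exact (hζ.pow_eq_one_iff_dvd _).mpr hd2
    have h2 : (ζ^m)^(p-t') * ζ^(m*t') = 1 := by
      rw [← pow_mul, ← pow_add, show m*(p-t') + m*t' = p*m from by
        rw [← Nat.mul_add]; rw [show p-t'+t' = p from by omega]; ring]
      rw [pow_mul, hζ.pow_eq_one, one_pow]
    rw [h1, h2]
  -- polynomial data
  set den : ℕ → Polynomial ℚ := fun k => qPP (X^m) (X^m) k * qPP (X^m) (X^m) (k+s) with hden
  set num : ℕ → Polynomial ℚ := fun k => qPP (X^r) (X^m) k * qPP (X^(m-r)) (X^m) (k+s) with hnum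
  set D : Polynomial ℚ := ∏ k ∈ Finset.range (p-s), den k with hD
  set Nb : Polynomial ℚ :=
    ∑ k ∈ Finset.range (p-s), num k * ∏ j ∈ (Finset.range (p-s)).erase k, den j with hNb
  set e : ℕ := m * Tri (t+1) with he
  set P : Polynomial ℚ := Nb * X^e - (-1)^t * D with hP
  have φden : ∀ k, (aeval ζ) (den k) = qP (ζ^m) (ζ^m) k * qP (ζ^m) (ζ^m) (k+s) := by
    intro k
    rw [hden]
    simp only [map_mul, aeval_qPP]
    simp [aeval_X_pow]
  have φnum : ∀ k, (aeval ζ) (num k) = qP (ζ^r) (ζ^m) k * qP (ζ^(m-r)) (ζ^m) (k+s) := by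
    intro k
    rw [hnum]
    simp only [map_mul, aeval_qPP]
    simp [aeval_X_pow]
  have hdval : ∀ k ∈ Finset.range (p-s), (aeval ζ) (den k) ≠ 0 := by
    intro k hk
    rw [Finset.mem_range] at hk
    rw [φden k]
    exact mul_ne_zero (qP_ne_zero (show k ≤ p-1 from by omega) hq)
      (qP_ne_zero (show k+s ≤ p-1 from by omega) hq)
  have hden0 : ∀ k ∈ Finset.range (p-s), den k ≠ 0 := by
    intro k hk h0
    exact hdval k hk (by rw [h0, map_zero])
  -- the K-side sum
  have hSval : ∑ k ∈ Finset.range (p-s), (aeval ζ) (num k) / (aeval ζ) (den k)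
      = (-1)^t * ((ζ:K)^e)⁻¹ := by
    have hstep : ∀ k ∈ Finset.range (p-s), (aeval ζ) (num k) / (aeval ζ) (den k)
        = qP ((ζ^m)^(p-t)) (ζ^m) k * qP ((ζ^m)^(p-t')) (ζ^m) (k+s) /
            (qP (ζ^m) (ζ^m) k * qP (ζ^m) (ζ^m) (k+s)) := by
      intro k hk
      rw [φnum k, φden k, hζr, hζmr]
    rw [Finset.sum_congr rfl hstep, main_sum hp1 hω htt' hs]
    rw [he, pow_mul]
  have hDvalp : (aeval ζ) D = ∏ k ∈ Finset.range (p-s), (aeval ζ) (den k) := by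
    rw [hD, map_prod]
  have hNbval : (aeval ζ) Nb = ((-1)^t * ((ζ:K)^e)⁻¹) * (aeval ζ) D := by
    have h1 : (aeval ζ) Nb = ∑ k ∈ Finset.range (p-s),
        (aeval ζ) (num k) * ∏ j ∈ (Finset.range (p-s)).erase k, (aeval ζ) (den j) := by
      rw [hNb, map_sum]
      apply Finset.sum_congr rfl
      intro k _
      rw [map_mul, map_prod]
    rw [h1, ← sum_div_mul_prod (p-s) (fun k => (aeval ζ) (num k))
      (fun k => (aeval ζ) (den k)) hdval, hSval, hDvalp]
  have hζe : (ζ:K)^e ≠ 0 := pow_ne_zero _ hζ0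
  have hPzero : (aeval ζ) P = 0 := by
    rw [hP, map_sub, map_mul, map_mul, map_pow, map_pow, aeval_X, map_neg, map_one, hNbval]
    linear_combination ((-1:K)^t * (aeval ζ) D) * (inv_mul_cancel₀ hζe)
  have hΦcyc : Phi p = Polynomial.cyclotomic p ℚ := by
    rw [Polynomial.cyclotomic_prime ℚ p]; rfl
  have hmin : Phi p = minpoly ℚ ζ := by
    rw [hΦcyc, Polynomial.cyclotomic_eq_minpoly_rat hζ hp.pos]
  have hdvd : Phi p ∣ P := by
    rw [hmin]
    exact minpoly.dvd ℚ ζ hPzero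
  obtain ⟨A, hA⟩ := hdvd
  have hΦaeval : (aeval ζ) (Phi p) = 0 := by rw [hmin]; exact minpoly.aeval ℚ ζ
  have hDζ : (aeval ζ) D ≠ 0 := by
    rw [hDvalp]
    exact Finset.prod_ne_zero_iff.mpr hdval
  refine ⟨A, D * X^e, ?_, ?_⟩
  · have hirr : Irreducible (Phi p) := by
      rw [hΦcyc]; exact Polynomial.cyclotomic.irreducible_rat hp.pos
    have hnd : ¬ (Phi p ∣ D * X^e) := by
      intro hdv
      obtain ⟨c, hc⟩ := hdv
      have h0 : (aeval ζ) (D * X^e) = 0 := by rw [hc, map_mul, hΦaeval, zero_mul]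
      rw [map_mul, map_pow, aeval_X] at h0
      exact (mul_ne_zero hDζ hζe) h0
    exact (hirr.coprime_iff_not_dvd.mpr hnd).symm
  · rw [pow_one, ← hA]
    have hfterm : ∀ k ∈ Finset.range (p-s),
        qP (qq ^ r) (qq ^ m) k * qP (qq ^ (m - r)) (qq ^ m) (k + s) /
          (qP (qq ^ m) (qq ^ m) k * qP (qq ^ m) (qq ^ m) (k + s))
        = algebraMap (Polynomial ℚ) (RatFunc ℚ) (num k) /
            algebraMap (Polynomial ℚ) (RatFunc ℚ) (den k) := by
      intro k _
      rw [hnum, hden]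
      simp only [map_mul, map_qPP (algebraMap (Polynomial ℚ) (RatFunc ℚ))]
      have hXX : ∀ j : ℕ, algebraMap (Polynomial ℚ) (RatFunc ℚ) (X^j) = qq^j := by
        intro j
        rw [map_pow, RatFunc.algebraMap_X]
        rfl
      rw [hXX, hXX, hXX]
    have hmapden : ∀ k ∈ Finset.range (p-s),
        algebraMap (Polynomial ℚ) (RatFunc ℚ) (den k) ≠ 0 :=
      fun k hk => RatFunc.algebraMap_ne_zero (hden0 k hk)
    have hfD : (∑ k ∈ Finset.range (p - s),
          qP (qq ^ r) (qq ^ m) k * qP (qq ^ (m - r)) (qq ^ m) (k + s) /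
            (qP (qq ^ m) (qq ^ m) k * qP (qq ^ m) (qq ^ m) (k + s))) *
          algebraMap (Polynomial ℚ) (RatFunc ℚ) D
        = algebraMap (Polynomial ℚ) (RatFunc ℚ) Nb := by
      rw [Finset.sum_congr rfl hfterm, hD, map_prod,
        sum_div_mul_prod (p-s) _ _ hmapden, hNb, map_sum]
      simp only [map_mul, map_prod]
    have h5 : 2 * Tri (t+1) + (t+1) = (t+1)*(t+1) := Tri_two (t+1)
    have hg : ((-1 : RatFunc ℚ)) ^ t * qq ^ (-((m : ℤ) * t * (t + 1) / 2))
        = (-1)^t * ((qq^e)⁻¹ : RatFunc ℚ) := by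
      congr 1
      have h5' : 2*((Tri (t+1)):ℤ) + (t+1) = (t+1)*(t+1) := by exact_mod_cast h5
      have hcast : (m:ℤ) * t * (t+1) = 2 * (e:ℤ) := by
        rw [he]
        push_cast
        linear_combination (-(m:ℤ)) * h5'
      rw [show -((m : ℤ) * t * (t + 1) / 2) = -(e:ℤ) from by
        rw [hcast, Int.mul_ediv_cancel_left _ (by norm_num)], zpow_neg, zpow_natCast]
    rw [hg]
    have hqe : (qq : RatFunc ℚ)^e ≠ 0 := pow_ne_zero _ RatFunc.X_ne_zero
    have hXe : algebraMap (Polynomial ℚ) (RatFunc ℚ) (X^e) = qq^e := by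
      rw [map_pow, RatFunc.algebraMap_X]
      rfl
    have hPmap : algebraMap (Polynomial ℚ) (RatFunc ℚ) P
        = algebraMap (Polynomial ℚ) (RatFunc ℚ) Nb * qq^e -
            (-1)^t * algebraMap (Polynomial ℚ) (RatFunc ℚ) D := by
      rw [hP, map_sub, map_mul, map_mul, hXe, map_pow, map_neg, map_one]
    rw [map_mul, hXe, hPmap, ← hfD]
    have hinv : ((qq : RatFunc ℚ)^e)⁻¹ * qq^e = 1 := inv_mul_cancel₀ hqe
    linear_combination (-((-1 : RatFunc ℚ))^t
      * (algebraMap (Polynomial ℚ) (RatFunc ℚ) D)) * hinv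
end
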